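/- arXiv:1905.09331 — 3 statements merged into one kernel-verified Lean document; each statement's English description precedes it below -/
import Mathlib

section
/- Let Φ be a finite crystallographic root system, w ∈ W(Φ) separable, and w₀ the longest element of W(Φ). Then w₀·w is also separable. -/
open scoped Classical
open Polynomial
noncomputable section

/-- The ambient Euclidean space `ℝⁿ`. -/
abbrev Esp (n : ℕ) : Type := EuclideanSpace ℝ (Fin n)

/-- The orthogonal reflection in the hyperplane orthogonal to the vector `α`. -/
def rootReflection {n : ℕ} (α : Esp n) : Esp n ≃ₗᵢ[ℝ] Esp n :=
  Submodule.reflection ((ℝ ∙ α)ᗮ)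

/-- A finite crystallographic reduced root system in `ℝⁿ`, together with a chosen
system of positive roots.  (The root system is not required to span `ℝⁿ`, so that
subsystems of a root system are again root systems in the same ambient space.) -/
structure RootSys (n : ℕ) where
  roots : Finset (Esp n)
  pos : Finset (Esp n)
  ne_zero : ∀ α ∈ roots, α ≠ (0 : Esp n)
  neg_mem : ∀ α ∈ roots, -α ∈ roots
  reduced : ∀ α ∈ roots, ∀ t : ℝ, t • α ∈ roots → t = 1 ∨ t = -1
  reflect_mem : ∀ α ∈ roots, ∀ β ∈ roots, rootReflection α β ∈ roots
  crystal : ∀ α ∈ roots, ∀ β ∈ roots, ∃ k : ℤ, 2 * (inner ℝ α β : ℝ) / (inner ℝ α α : ℝ) = (k : ℝ)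
  pos_subset : pos ⊆ roots
  pos_iff : ∀ α ∈ roots, (α ∈ pos ↔ -α ∉ pos)
  pos_add : ∀ α ∈ pos, ∀ β ∈ pos, α + β ∈ roots → α + β ∈ pos

namespace RootSys

variable {n : ℕ}

/-- The Weyl group of a root system: the subgroup of the linear isometries of `ℝⁿ`
generated by the reflections in the roots. -/
def weylGroup (Φ : RootSys n) : Subgroup (Esp n ≃ₗᵢ[ℝ] Esp n) :=
  Subgroup.closure {g | ∃ α ∈ Φ.roots, g = rootReflection α}

/-- The inversion set `I_Φ(w) = {α ∈ Φ⁺ : w α ∈ -Φ⁺}`. -/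
def invSet (Φ : RootSys n) (w : Esp n ≃ₗᵢ[ℝ] Esp n) : Finset (Esp n) :=
  Φ.pos.filter fun α => -(w α) ∈ Φ.pos

/-- The length of a Weyl group element, `ℓ(w) = |I_Φ(w)|`. -/
def len (Φ : RootSys n) (w : Esp n ≃ₗᵢ[ℝ] Esp n) : ℕ :=
  (Φ.invSet w).card

/-- The simple roots: the indecomposable positive roots. -/
def simples (Φ : RootSys n) : Finset (Esp n) :=
  Φ.pos.filter fun α => ¬ ∃ β ∈ Φ.pos, ∃ γ ∈ Φ.pos, α = β + γ

/-- The root poset order: `α ≤ β` iff `β - α` is a nonnegative linear combination of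
the simple roots. -/
def rootLE (Φ : RootSys n) (α β : Esp n) : Prop :=
  ∃ c : Esp n → ℝ, (∀ γ, 0 ≤ c γ) ∧ β - α = ∑ γ ∈ Φ.simples, c γ • γ

/-- The positive roots `β` with `β ≥ α` in the root poset order. -/
def upperRoots (Φ : RootSys n) (α : Esp n) : Finset (Esp n) :=
  Φ.pos.filter fun β => Φ.rootLE α β

/-- `Φ'` is the parabolic root subsystem of `Φ` generated by the subset `Δ'` of the
simple roots. -/
def IsParabolic (Φ Φ' : RootSys n) (Δ' : Finset (Esp n)) : Prop :=
  Φ'.roots = Φ.roots.filter (fun β => β ∈ Submodule.span ℝ (Δ' : Set (Esp n))) ∧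
  Φ'.pos = Φ.pos.filter (fun β => β ∈ Submodule.span ℝ (Δ' : Set (Esp n)))

/-- `u` is the restriction `w|_{Φ'}` of `w` to the subsystem `Φ'` of `Φ`: the unique
element of `W(Φ')` with `I_{Φ'}(u) = I_Φ(w) ∩ (Φ')⁺`. -/
def IsRestriction (Φ' : RootSys n) (u : Esp n ≃ₗᵢ[ℝ] Esp n)
    (Φ : RootSys n) (w : Esp n ≃ₗᵢ[ℝ] Esp n) : Prop :=
  u ∈ Φ'.weylGroup ∧ Φ'.invSet u = Φ.invSet w ∩ Φ'.pos

/-- A decomposition of `Φ` as an orthogonal direct sum of two nonempty subsystems. -/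
def IsOrthDecomp (Φ Φ₁ Φ₂ : RootSys n) : Prop :=
  Φ₁.roots.Nonempty ∧ Φ₂.roots.Nonempty ∧
  (∀ α ∈ Φ₁.roots, ∀ β ∈ Φ₂.roots, (inner ℝ α β : ℝ) = 0) ∧
  Φ.roots = Φ₁.roots ∪ Φ₂.roots ∧ Φ.pos = Φ₁.pos ∪ Φ₂.pos

/-- Irreducibility of a (nonempty) root system. -/
def IsIrreducible (Φ : RootSys n) : Prop :=
  Φ.roots.Nonempty ∧ ¬ ∃ Φ₁ Φ₂ : RootSys n, Φ.IsOrthDecomp Φ₁ Φ₂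

/-- `w₀` is the longest element of `W(Φ)`: the element whose inversion set is all of `Φ⁺`. -/
def IsLongest (Φ : RootSys n) (w₀ : Esp n ≃ₗᵢ[ℝ] Esp n) : Prop :=
  w₀ ∈ Φ.weylGroup ∧ Φ.invSet w₀ = Φ.pos

end RootSys

/-- Separable elements of a Weyl group (Definition 3.1 of the paper):
`w` is separable if `Φ` has rank one; or `Φ` is reducible and the restriction of `w`
to each part of an orthogonal decomposition is separable; or `Φ` is irreducible and
there is a pivot `α ∈ Δ` such that the restriction of `w` to the parabolic subsystem
generated by `Δ ∖ {α}` is separable and `{β ∈ Φ⁺ : β ≥ α}` is contained in or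
disjoint from `I_Φ(w)`. -/
inductive Separable : {n : ℕ} → (Φ : RootSys n) → (Esp n ≃ₗᵢ[ℝ] Esp n) → Prop where
  | rank_one {n : ℕ} (Φ : RootSys n) (w : Esp n ≃ₗᵢ[ℝ] Esp n)
      (hw : w ∈ Φ.weylGroup) (hrk : ∃ α, Φ.pos = {α}) : Separable Φ w
  | reducible {n : ℕ} (Φ Φ₁ Φ₂ : RootSys n) (w u₁ u₂ : Esp n ≃ₗᵢ[ℝ] Esp n)
      (hw : w ∈ Φ.weylGroup) (hd : Φ.IsOrthDecomp Φ₁ Φ₂)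
      (h₁ : Φ₁.IsRestriction u₁ Φ w) (h₂ : Φ₂.IsRestriction u₂ Φ w)
      (s₁ : Separable Φ₁ u₁) (s₂ : Separable Φ₂ u₂) : Separable Φ w
  | pivot {n : ℕ} (Φ Φ' : RootSys n) (w u : Esp n ≃ₗᵢ[ℝ] Esp n) (α : Esp n)
      (hw : w ∈ Φ.weylGroup) (hirr : Φ.IsIrreducible) (hα : α ∈ Φ.simples)
      (hpar : Φ.IsParabolic Φ' (Φ.simples \ {α}))
      (hres : Φ'.IsRestriction u Φ w) (hsep : Separable Φ' u)
      (hcond : Φ.upperRoots α ⊆ Φ.invSet w ∨ ∀ β ∈ Φ.upperRoots α, β ∉ Φ.invSet w) :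
      Separable Φ w

/-- The rank generating polynomial `∑_{i=0}^{N} a_i qⁱ` of a sequence of coefficients. -/
def genPoly (a : ℕ → ℕ) (N : ℕ) : Polynomial ℤ :=
  ∑ i ∈ Finset.range (N + 1), Polynomial.C (a i : ℤ) * Polynomial.X ^ i

/-- A sequence is unimodal (weakly increases, then weakly decreases). -/
def UnimodalSeq (a : ℕ → ℕ) : Prop :=
  ∃ m : ℕ, (∀ i j, i ≤ j → j ≤ m → a i ≤ a j) ∧ (∀ i j, m ≤ i → i ≤ j → a j ≤ a i)

namespace RootSys

variable {n : ℕ}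

/-- The size of the `i`-th rank of the lower order ideal `Λ_w` in left weak order. -/
def lowerRankSize (Φ : RootSys n) (w : Esp n ≃ₗᵢ[ℝ] Esp n) (i : ℕ) : ℕ :=
  Set.ncard {u : Esp n ≃ₗᵢ[ℝ] Esp n |
    u ∈ Φ.weylGroup ∧ Φ.invSet u ⊆ Φ.invSet w ∧ Φ.len u = i}

/-- The size of the `i`-th rank of the upper order ideal `V_w` in left weak order
(graded by `ℓ(u) - ℓ(w)`). -/
def upperRankSize (Φ : RootSys n) (w : Esp n ≃ₗᵢ[ℝ] Esp n) (i : ℕ) : ℕ :=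
  Set.ncard {u : Esp n ≃ₗᵢ[ℝ] Esp n |
    u ∈ Φ.weylGroup ∧ Φ.invSet w ⊆ Φ.invSet u ∧ Φ.len u = Φ.len w + i}

/-- The number of elements of the Weyl group of length `i`. -/
def weylRankSize (Φ : RootSys n) (i : ℕ) : ℕ :=
  Set.ncard {u : Esp n ≃ₗᵢ[ℝ] Esp n | u ∈ Φ.weylGroup ∧ Φ.len u = i}

end RootSys

namespace RootSys

variable {n : ℕ}

/-- `(w, Φ)` contains one of the type `A₃` patterns `3142` or `2413`: there is a
subsystem `Φ ∩ U` of type `A₃` with simple roots `a, b, c` (in this order) on which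
the inversion set of `w` restricts to the inversion set of `3142` (namely
`{a, c, a+b+c}`) or of `2413` (namely `{b, a+b, b+c}`). -/
def ContainsA3Pattern (Φ : RootSys n) (w : Esp n ≃ₗᵢ[ℝ] Esp n) : Prop :=
  ∃ (U : Submodule ℝ (Esp n)) (a b c : Esp n),
    LinearIndependent ℝ ![a, b, c] ∧
    Φ.pos.filter (fun β => β ∈ U) = ({a, b, c, a + b, b + c, a + b + c} : Finset (Esp n)) ∧
    ((Φ.invSet w).filter (fun β => β ∈ U) = ({b, a + b, b + c} : Finset (Esp n)) ∨
      (Φ.invSet w).filter (fun β => β ∈ U) = ({a, c, a + b + c} : Finset (Esp n)))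

/-- `(w, Φ)` contains one of the two type `B₂` patterns whose inversion sets have
size two: there is a subsystem `Φ ∩ U` of type `B₂` on which the inversion set of
`w` restricts to a set of size two. -/
def ContainsB2Pattern (Φ : RootSys n) (w : Esp n ≃ₗᵢ[ℝ] Esp n) : Prop :=
  ∃ (U : Submodule ℝ (Esp n)) (p q : Esp n),
    LinearIndependent ℝ ![p, q] ∧
    Φ.pos.filter (fun β => β ∈ U) = ({p, q, p + q, p + 2 • q} : Finset (Esp n)) ∧
    ((Φ.invSet w).filter (fun β => β ∈ U)).card = 2

/-- `(w, Φ)` contains one of the six type `G₂` patterns whose inversion sets have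
sizes two, three, or four. -/
def ContainsG2Pattern (Φ : RootSys n) (w : Esp n ≃ₗᵢ[ℝ] Esp n) : Prop :=
  ∃ (U : Submodule ℝ (Esp n)) (p q : Esp n),
    LinearIndependent ℝ ![p, q] ∧
    Φ.pos.filter (fun β => β ∈ U) =
      ({p, q, p + q, p + 2 • q, p + 3 • q, 2 • p + 3 • q} : Finset (Esp n)) ∧
    ((Φ.invSet w).filter (fun β => β ∈ U)).card ∈ ({2, 3, 4} : Set ℕ)

/-- A positive root is *small* if all its coefficients on the simple roots are `0` or `1`. -/
def IsSmall (Φ : RootSys n) (β : Esp n) : Prop :=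
  ∃ c : Esp n → ℝ, β = ∑ γ ∈ Φ.simples, c γ • γ ∧ ∀ γ ∈ Φ.simples, c γ = 0 ∨ c γ = 1

/-- The support of `β` (written `β = ∑ c γ • γ` over the simple roots) contains the
simple root `t`. -/
def SuppContains (Φ : RootSys n) (t β : Esp n) : Prop :=
  ∃ c : Esp n → ℝ, β = ∑ γ ∈ Φ.simples, c γ • γ ∧ c t ≠ 0

/-- The parabolic subgroup `W_J` generated by the reflections in the roots of `J`. -/
def parabolicSubgroup (J : Finset (Esp n)) : Subgroup (Esp n ≃ₗᵢ[ℝ] Esp n) :=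
  Subgroup.closure {g | ∃ α ∈ J, g = rootReflection α}

/-- `w` is a minimal-length coset representative of `w W_J`, i.e. `w ∈ W^J`. -/
def IsMinCosetRep (Φ : RootSys n) (J : Finset (Esp n)) (w : Esp n ≃ₗᵢ[ℝ] Esp n) : Prop :=
  w ∈ Φ.weylGroup ∧ ∀ u ∈ parabolicSubgroup (n := n) J, Φ.len w ≤ Φ.len (w * u)

/-- Biconvexity of a subset `A` of a set `P` of positive roots. -/
def IsBiconvexIn (P A : Finset (Esp n)) : Prop :=
  A ⊆ P ∧ (∀ a ∈ A, ∀ b ∈ A, a + b ∈ P → a + b ∈ A) ∧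
    (∀ a ∈ P, ∀ b ∈ P, a ∉ A → b ∉ A → a + b ∈ P → a + b ∉ A)

/-- The number of elements of `W(Φ)` of length `ℓ(w') + i` restricting to `w'` on the
subsystem `Φ'`. -/
def fiberRankSize (Φ Φ' : RootSys n) (w' : Esp n ≃ₗᵢ[ℝ] Esp n) (i : ℕ) : ℕ :=
  Set.ncard {w : Esp n ≃ₗᵢ[ℝ] Esp n |
    w ∈ Φ.weylGroup ∧ Φ'.IsRestriction w' Φ w ∧ Φ.len w = Φ'.len w' + i}

end RootSys

/-- Isomorphism of patterns: a linear map carrying the roots, positive roots, and the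
inversion set of the one pattern bijectively onto those of the other. -/
def PatternIso {m k : ℕ} (Ψ : RootSys m) (u : Esp m ≃ₗᵢ[ℝ] Esp m)
    (Ψ' : RootSys k) (u' : Esp k ≃ₗᵢ[ℝ] Esp k) : Prop :=
  ∃ f : Esp m →ₗ[ℝ] Esp k,
    Set.InjOn f (Ψ.roots : Set (Esp m)) ∧
    Ψ.roots.image ⇑f = Ψ'.roots ∧ Ψ.pos.image ⇑f = Ψ'.pos ∧
    (Ψ.invSet u).image ⇑f = Ψ'.invSet u'

/-- `(w, Φ)` contains a pattern isomorphic to `(u, Ψ)`: there is a subsystem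
`Φ ∩ U` of `Φ` on which `w` restricts to an element whose pattern is isomorphic
to `(u, Ψ)`. -/
def ContainsPatternGen {m k : ℕ} (Φ : RootSys m) (w : Esp m ≃ₗᵢ[ℝ] Esp m)
    (Ψ : RootSys k) (u : Esp k ≃ₗᵢ[ℝ] Esp k) : Prop :=
  ∃ (U : Submodule ℝ (Esp m)) (Ψ₀ : RootSys m) (u₀ : Esp m ≃ₗᵢ[ℝ] Esp m),
    Ψ₀.roots = Φ.roots.filter (fun β => β ∈ U) ∧
    Ψ₀.pos = Φ.pos.filter (fun β => β ∈ U) ∧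
    u₀ ∈ Ψ₀.weylGroup ∧ Ψ₀.invSet u₀ = (Φ.invSet w).filter (fun β => β ∈ U) ∧
    PatternIso Ψ₀ u₀ Ψ u

/-- The `i`-th standard basis vector of `ℝⁿ`. -/
def stdB (n : ℕ) (i : Fin n) : Esp n := EuclideanSpace.single i (1 : ℝ)

/-- The `i`-th simple root of the type `Bₙ` root system: `eᵢ - eᵢ₊₁` for `i < n-1`
and `eₙ₋₁` (the last standard basis vector) for `i = n-1`. -/
def bSimple (n : ℕ) (i : Fin n) : Esp n :=
  stdB n i - (if h : (i : ℕ) + 1 < n then stdB n ⟨(i : ℕ) + 1, h⟩ else 0)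

/-- The set of positive roots of the type `Bₙ` root system. -/
def typeBPos (n : ℕ) : Set (Esp n) :=
  {v | ∃ i j : Fin n, i < j ∧ (v = stdB n i - stdB n j ∨ v = stdB n i + stdB n j)} ∪
    {v | ∃ i : Fin n, v = stdB n i}

/-- The set of positive roots of the type `Cₙ` root system. -/
def typeCPos (n : ℕ) : Set (Esp n) :=
  {v | ∃ i j : Fin n, i < j ∧ (v = stdB n i - stdB n j ∨ v = stdB n i + stdB n j)} ∪
    {v | ∃ i : Fin n, v = 2 • stdB n i}

/-- The set of positive roots of the type `Aₙ` root system (in `ℝⁿ⁺¹`). -/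
def typeAPos (n : ℕ) : Set (Esp (n + 1)) :=
  {v | ∃ i j : Fin (n + 1), i < j ∧ v = stdB (n + 1) i - stdB (n + 1) j}


/-! ### Auxiliary development for the proof -/

section Aux

lemma rootReflection_self' {n : ℕ} (β : Esp n) : rootReflection β β = -β :=
  Submodule.reflection_orthogonalComplement_singleton_eq_neg β

lemma rootReflection_apply' {n : ℕ} (β γ : Esp n) (hβ : β ≠ 0) :
    rootReflection β γ = γ - ((2 * (inner ℝ β γ : ℝ) / (inner ℝ β β : ℝ))) • β := by
  have hbb : (inner ℝ β β : ℝ) ≠ 0 := fun h => hβ (inner_self_eq_zero.mp h)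
  set t : ℝ := (inner ℝ β γ : ℝ) / (inner ℝ β β : ℝ) with ht
  have hdecomp : γ = (γ - t • β) + t • β := by abel
  have h1 : γ - t • β ∈ (ℝ ∙ β)ᗮ := by
    rw [Submodule.mem_orthogonal_singleton_iff_inner_right]
    rw [inner_sub_right, real_inner_smul_right]
    rw [ht, div_mul_cancel₀ _ hbb, sub_self]
  have h2 : rootReflection β (γ - t • β) = γ - t • β :=
    Submodule.reflection_mem_subspace_eq_self h1
  have h3 : rootReflection β (t • β) = -(t • β) := by
    rw [map_smul, rootReflection_self', smul_neg]
  calc rootReflection β γ = rootReflection β ((γ - t • β) + t • β) := by rw [← hdecomp]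
    _ = (γ - t • β) + -(t • β) := by rw [map_add, h2, h3]
    _ = γ - (2 * (inner ℝ β γ : ℝ) / (inner ℝ β β : ℝ)) • β := by
        rw [ht]
        rw [show 2 * (inner ℝ β γ : ℝ) / (inner ℝ β β : ℝ)
              = 2 * ((inner ℝ β γ : ℝ)/(inner ℝ β β : ℝ)) by ring]
        module

lemma rootReflection_inv' {n : ℕ} (β : Esp n) : (rootReflection β)⁻¹ = rootReflection β := by
  show (rootReflection β).symm = rootReflection β
  exact Submodule.reflection_symm

lemma rootReflection_invol {n : ℕ} (β γ : Esp n) :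
    rootReflection β (rootReflection β γ) = γ :=
  Submodule.reflection_reflection _ γ

lemma rootReflection_conj {n : ℕ} (w : Esp n ≃ₗᵢ[ℝ] Esp n) (β γ : Esp n) (hβ : β ≠ 0) :
    rootReflection (w β) (w γ) = w (rootReflection β γ) := by
  have hwβ : w β ≠ 0 := fun h => hβ (by simpa using (w.map_eq_zero_iff).mp h)
  rw [rootReflection_apply' _ _ hwβ, rootReflection_apply' _ _ hβ, map_sub, map_smul,
      LinearIsometryEquiv.inner_map_map, LinearIsometryEquiv.inner_map_map]

namespace RootSys

variable {n : ℕ}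

lemma pos_of_not_neg (Φ : RootSys n) {α : Esp n} (hα : α ∈ Φ.roots) (h : -α ∉ Φ.pos) :
    α ∈ Φ.pos := (Φ.pos_iff α hα).mpr h

lemma not_neg_pos (Φ : RootSys n) {α : Esp n} (h : α ∈ Φ.pos) : -α ∉ Φ.pos :=
  (Φ.pos_iff α (Φ.pos_subset h)).mp h

lemma weyl_maps_roots (Φ : RootSys n) {w : Esp n ≃ₗᵢ[ℝ] Esp n} (hw : w ∈ Φ.weylGroup) :
    ∀ α ∈ Φ.roots, w α ∈ Φ.roots := by
  have H : (∀ α ∈ Φ.roots, w α ∈ Φ.roots) ∧ (∀ α ∈ Φ.roots, w⁻¹ α ∈ Φ.roots) := by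
    refine Subgroup.closure_induction
      (p := fun g _ => (∀ α ∈ Φ.roots, g α ∈ Φ.roots) ∧ (∀ α ∈ Φ.roots, g⁻¹ α ∈ Φ.roots))
      ?_ ?_ ?_ ?_ hw
    · rintro x ⟨β, hβ, rfl⟩
      refine ⟨fun α hα => Φ.reflect_mem β hβ α hα, ?_⟩
      rw [rootReflection_inv']
      exact fun α hα => Φ.reflect_mem β hβ α hα
    · simp
    · rintro x y hx hy ⟨hx1, hx2⟩ ⟨hy1, hy2⟩
      refine ⟨fun α hα => hx1 _ (hy1 _ hα), ?_⟩
      intro α hα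
      rw [mul_inv_rev]
      exact hy2 _ (hx2 _ hα)
    · rintro x hx ⟨h1, h2⟩
      refine ⟨h2, ?_⟩
      rw [inv_inv]
      exact h1
  exact H.1

/-- The key geometric lemma: if `β, γ` are positive roots and `s_β γ` is a negative
root, then `⟨β, γ⟩ > 0`. -/
lemma inner_pos_of_reflect_neg (Φ : RootSys n) {β γ : Esp n} (hβ : β ∈ Φ.pos) (hγ : γ ∈ Φ.pos)
    (hr : -(rootReflection β γ) ∈ Φ.pos) : 0 < (inner ℝ β γ : ℝ) := by
  have hβr : β ∈ Φ.roots := Φ.pos_subset hβ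
  have hγr : γ ∈ Φ.roots := Φ.pos_subset hγ
  have hβ0 : β ≠ 0 := Φ.ne_zero β hβr
  have hγ0 : γ ≠ 0 := Φ.ne_zero γ hγr
  have hbb : (0:ℝ) < inner ℝ β β :=
    lt_of_le_of_ne real_inner_self_nonneg (fun h => hβ0 (inner_self_eq_zero.mp h.symm))
  have hgg : (0:ℝ) < inner ℝ γ γ :=
    lt_of_le_of_ne real_inner_self_nonneg (fun h => hγ0 (inner_self_eq_zero.mp h.symm))
  obtain ⟨c, hc⟩ := Φ.crystal β hβr γ hγr
  obtain ⟨d, hd⟩ := Φ.crystal γ hγr β hβr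
  have hrefl : rootReflection β γ = γ - ((c:ℝ)) • β := by
    rw [rootReflection_apply' β γ hβ0, hc]
  by_contra hle
  push_neg at hle
  rcases eq_or_lt_of_le hle with heq | hlt
  · -- ⟪β,γ⟫ = 0
    have hc0 : (c:ℝ) = 0 := by rw [← hc, heq]; simp
    rw [hrefl, hc0] at hr
    simp only [zero_smul, sub_zero] at hr
    exact Φ.not_neg_pos hγ hr
  · -- ⟪β,γ⟫ < 0
    have hgb : (inner ℝ γ β : ℝ) = inner ℝ β γ := (real_inner_comm β γ)
    have hcneg : (c:ℝ) < 0 := by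
      rw [← hc]; exact div_neg_of_neg_of_pos (by linarith) hbb
    have hdneg : (d:ℝ) < 0 := by
      rw [← hd, hgb]; exact div_neg_of_neg_of_pos (by linarith) hgg
    have hcZ : c ≤ -1 := by
      have : c < 0 := by exact_mod_cast hcneg
      omega
    have hdZ : d ≤ -1 := by
      have : d < 0 := by exact_mod_cast hdneg
      omega
    have hγnβ : γ ≠ -β := by
      intro h; rw [h] at hγ; exact Φ.not_neg_pos hβ hγ
    have hbne : (inner ℝ β β : ℝ) ≠ 0 := ne_of_gt hbb
    have hgne : (inner ℝ γ γ : ℝ) ≠ 0 := ne_of_gt hgg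
    have hcb : 2 * (inner ℝ β γ : ℝ) = (c:ℝ) * inner ℝ β β := by
      rw [← hc, div_mul_cancel₀ _ hbne]
    have hdg : 2 * (inner ℝ β γ : ℝ) = (d:ℝ) * inner ℝ γ γ := by
      rw [← hgb, ← hd, div_mul_cancel₀ _ hgne]
    have hcs : (inner ℝ β γ : ℝ) * inner ℝ β γ ≤ inner ℝ β β * inner ℝ γ γ :=
      real_inner_mul_inner_self_le β γ
    have e0 : ((c:ℝ)*(d:ℝ)) * (inner ℝ β β * inner ℝ γ γ)
        = (2*(inner ℝ β γ:ℝ)) * (2*(inner ℝ β γ:ℝ)) := by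
      linear_combination (-(2*(inner ℝ β γ:ℝ))) * hdg + (-((d:ℝ) * (inner ℝ γ γ : ℝ))) * hcb
    have hcd4' : c * d ≤ 4 := by
      have h5 : ((c:ℝ)*(d:ℝ)) * (inner ℝ β β * inner ℝ γ γ) ≤ 4 * (inner ℝ β β * inner ℝ γ γ) := by
        rw [e0]; nlinarith [hcs]
      have h6 : ((c:ℝ)*(d:ℝ)) ≤ 4 := le_of_mul_le_mul_right h5 (mul_pos hbb hgg)
      exact_mod_cast h6
    have hcd3 : c * d ≤ 3 := by
      rcases lt_or_eq_of_le hcd4' with h | h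
      · exact Int.lt_add_one_iff.mp (by linarith)
      · exfalso
        have h4 : ((c:ℝ)) * (d:ℝ) = 4 := by exact_mod_cast h
        have heq4 : (inner ℝ β γ : ℝ) * inner ℝ β γ = inner ℝ β β * inner ℝ γ γ := by
          nlinarith [e0, h4]
        set t : ℝ := (c:ℝ)/2 with htdef
        have hexp : (inner ℝ (γ - t • β) (γ - t • β) : ℝ)
            = inner ℝ γ γ - 2 * t * inner ℝ β γ + t^2 * inner ℝ β β := by
          simp only [inner_sub_left, inner_sub_right, real_inner_smul_left,
            real_inner_smul_right, real_inner_comm β γ]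
          ring
        have hin' : (inner ℝ β β : ℝ) * inner ℝ (γ - t • β) (γ - t • β) = 0 := by
          rw [hexp, htdef]
          linear_combination ((2*(inner ℝ β γ:ℝ) - (c:ℝ)*(inner ℝ β β:ℝ))/4) * hcb - heq4
        have hin : (inner ℝ (γ - t • β) (γ - t • β) : ℝ) = 0 := by
          rcases mul_eq_zero.mp hin' with h' | h'
          · exact absurd h' hbne
          · exact h'
        have hγt : γ = t • β := sub_eq_zero.mp (inner_self_eq_zero.mp hin)
        have ht1 : t = 1 ∨ t = -1 := by
          apply Φ.reduced β hβr t
          rw [← hγt]; exact hγr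
        have htneg : t < 0 := by rw [htdef]; linarith
        rcases ht1 with h1 | h1
        · rw [h1] at htneg; linarith
        · rw [h1] at hγt
          exact hγnβ (by rw [hγt]; module)
    have hcge : -3 ≤ c := by
      by_contra hcon
      push_neg at hcon
      have h1 : (4:ℤ) ≤ -c := by omega
      have h2 : (1:ℤ) ≤ -d := by omega
      have h3 := mul_le_mul h1 h2 (by omega) (by omega)
      rw [neg_mul_neg] at h3
      linarith
    -- γ + β is a root
    have hsum_root : γ + β ∈ Φ.roots := by
      have hone : c = -1 ∨ d = -1 := by
        by_contra hcon
        push_neg at hcon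
        have h1 : (2:ℤ) ≤ -c := by omega
        have h2 : (2:ℤ) ≤ -d := by omega
        have h3 := mul_le_mul h1 h2 (by omega) (by omega)
        rw [neg_mul_neg] at h3
        linarith
      rcases hone with h | h
      · have := Φ.reflect_mem β hβr γ hγr
        rw [hrefl, h] at this
        convert this using 1
        push_cast; module
      · have hrefl2 : rootReflection γ β = β - ((d:ℝ)) • γ := by
          rw [rootReflection_apply' γ β hγ0, hd]
        have := Φ.reflect_mem γ hγr β hβr
        rw [hrefl2, h] at this
        convert this using 1
        push_cast; module
    have hsum_pos : γ + β ∈ Φ.pos := Φ.pos_add γ hγ β hβ hsum_root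
    -- now the chain, by cases on c ∈ {-1, -2, -3}
    have hsβγ_root : rootReflection β γ ∈ Φ.roots := Φ.reflect_mem β hβr γ hγr
    have hfinal : rootReflection β γ ∈ Φ.pos := by
      interval_cases c
      · -- c = -3 : s_β γ = γ + 3 β
        have h2root : γ + β + β ∈ Φ.roots := by
          have := Φ.reflect_mem β hβr _ hsum_root
          have he : rootReflection β (γ + β) = γ + β + β := by
            rw [map_add, hrefl, rootReflection_self']
            push_cast; module
          rwa [he] at this
        have h2pos : γ + β + β ∈ Φ.pos := Φ.pos_add _ hsum_pos β hβ h2root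
        have h3root : γ + β + β + β ∈ Φ.roots := by
          have he : rootReflection β γ = γ + β + β + β := by rw [hrefl]; push_cast; module
          rwa [he] at hsβγ_root
        have h3pos : γ + β + β + β ∈ Φ.pos := Φ.pos_add _ h2pos β hβ h3root
        have he : rootReflection β γ = γ + β + β + β := by rw [hrefl]; push_cast; module
        rwa [he]
      · -- c = -2 : s_β γ = γ + 2 β
        have h2root : γ + β + β ∈ Φ.roots := by
          have he : rootReflection β γ = γ + β + β := by rw [hrefl]; push_cast; module
          rwa [he] at hsβγ_root
        have h2pos : γ + β + β ∈ Φ.pos := Φ.pos_add _ hsum_pos β hβ h2root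
        have he : rootReflection β γ = γ + β + β := by rw [hrefl]; push_cast; module
        rwa [he]
      · -- c = -1 : s_β γ = γ + β
        have he : rootReflection β γ = γ + β := by rw [hrefl]; push_cast; module
        rwa [he]
    exact Φ.not_neg_pos hfinal hr

/-- Multiplying on the right by the reflection in a non-inversion increases length. -/
lemma len_lt_mul_reflection (Φ : RootSys n) {w : Esp n ≃ₗᵢ[ℝ] Esp n} {β : Esp n}
    (hw : w ∈ Φ.weylGroup) (hβ : β ∈ Φ.pos) (hwβ : -(w β) ∉ Φ.pos) :
    Φ.len w < Φ.len (w * rootReflection β) := by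
  classical
  have hβr : β ∈ Φ.roots := Φ.pos_subset hβ
  have hβ0 : β ≠ 0 := Φ.ne_zero β hβr
  have hroots := Φ.weyl_maps_roots hw
  set sβ : Esp n ≃ₗᵢ[ℝ] Esp n := rootReflection β with hsβdef
  have hsβroot : ∀ γ ∈ Φ.roots, sβ γ ∈ Φ.roots := fun γ hγ => Φ.reflect_mem β hβr γ hγ
  have invol : ∀ γ : Esp n, sβ (sβ γ) = γ := fun γ => rootReflection_invol β γ
  set σ : Esp n → Esp n := fun γ => if sβ γ ∈ Φ.pos then sβ γ else -(sβ γ) with hσdef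
  set A : Finset (Esp n) := Φ.invSet w with hA
  set D : Finset (Esp n) := Φ.invSet sβ with hD
  set S : Finset (Esp n) := Φ.invSet (w * sβ) with hS
  have memA : ∀ γ, γ ∈ A ↔ γ ∈ Φ.pos ∧ -(w γ) ∈ Φ.pos := fun γ => Finset.mem_filter
  have memD : ∀ γ, γ ∈ D ↔ γ ∈ Φ.pos ∧ -(sβ γ) ∈ Φ.pos := fun γ => Finset.mem_filter
  have memS : ∀ γ, γ ∈ S ↔ γ ∈ Φ.pos ∧ -(w (sβ γ)) ∈ Φ.pos := fun γ => Finset.mem_filter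
  -- basic facts about σ
  have hσpos : ∀ γ ∈ Φ.pos, σ γ ∈ Φ.pos := by
    intro γ hγ
    by_cases h : sβ γ ∈ Φ.pos
    · simpa [hσdef, h] using h
    · have : -(sβ γ) ∈ Φ.pos :=
        Φ.pos_of_not_neg (Φ.neg_mem _ (hsβroot γ (Φ.pos_subset hγ))) (by rwa [neg_neg])
      simpa [hσdef, h] using this
  have hσD : ∀ γ ∈ Φ.pos, γ ∈ D → σ γ ∈ D := by
    intro γ hγ hγD
    have h1 : -(sβ γ) ∈ Φ.pos := ((memD γ).mp hγD).2
    have h2 : sβ γ ∉ Φ.pos := fun h => Φ.not_neg_pos h h1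
    have hσγ : σ γ = -(sβ γ) := by simp [hσdef, h2]
    rw [memD, hσγ]
    refine ⟨h1, ?_⟩
    rw [map_neg, invol γ, neg_neg]
    exact hγ
  have hσinvol : ∀ γ ∈ Φ.pos, σ (σ γ) = γ := by
    intro γ hγ
    by_cases h : sβ γ ∈ Φ.pos
    · have h2 : σ γ = sβ γ := by simp [hσdef, h]
      rw [h2]
      simp [hσdef, invol γ, hγ]
    · have h2 : σ γ = -(sβ γ) := by simp [hσdef, h]
      have hnγ : -γ ∉ Φ.pos := Φ.not_neg_pos hγ
      rw [h2]
      simp only [hσdef, map_neg, invol γ]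
      rw [if_neg hnγ, neg_neg]
  have hσD' : ∀ γ ∈ Φ.pos, σ γ ∈ D → γ ∈ D := by
    intro γ hγ h
    have := hσD (σ γ) (hσpos γ hγ) h
    rwa [hσinvol γ hγ] at this
  -- claim 1: the membership characterization of S
  have claim1 : ∀ γ ∈ Φ.pos, (γ ∈ S ↔ ((γ ∈ D ∧ σ γ ∉ A) ∨ (γ ∉ D ∧ σ γ ∈ A))) := by
    intro γ hγ
    have hγr : γ ∈ Φ.roots := Φ.pos_subset hγ
    by_cases hγD : -(sβ γ) ∈ Φ.pos
    · have hD1 : γ ∈ D := (memD γ).mpr ⟨hγ, hγD⟩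
      have h2 : sβ γ ∉ Φ.pos := fun h => Φ.not_neg_pos h hγD
      have hσγ : σ γ = -(sβ γ) := by simp [hσdef, h2]
      have hwr : w (σ γ) ∈ Φ.roots := hroots _ (Φ.pos_subset (hσpos γ hγ))
      constructor
      · intro hγS
        refine Or.inl ⟨hD1, ?_⟩
        intro hσA
        have h3 : -(w (σ γ)) ∈ Φ.pos := ((memA _).mp hσA).2
        have h4 : -(w (sβ γ)) ∈ Φ.pos := ((memS γ).mp hγS).2
        rw [hσγ, map_neg, neg_neg] at h3
        exact Φ.not_neg_pos h3 h4
      · rintro (⟨_, hσA⟩ | ⟨hD2, _⟩)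
        · rw [memS]
          refine ⟨hγ, ?_⟩
          have : w (σ γ) ∈ Φ.pos := by
            apply Φ.pos_of_not_neg hwr
            intro h
            exact hσA ((memA _).mpr ⟨hσpos γ hγ, h⟩)
          rw [hσγ, map_neg] at this
          exact this
        · exact absurd hD1 hD2
    · have hD1 : γ ∉ D := fun h => hγD ((memD γ).mp h).2
      have h2 : sβ γ ∈ Φ.pos := Φ.pos_of_not_neg (hsβroot γ hγr) hγD
      have hσγ : σ γ = sβ γ := by simp [hσdef, h2]
      constructor
      · intro hγS
        refine Or.inr ⟨hD1, ?_⟩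
        rw [memA, hσγ]
        exact ⟨h2, ((memS γ).mp hγS).2⟩
      · rintro (⟨hD2, _⟩ | ⟨_, hσA⟩)
        · exact absurd hD2 hD1
        · rw [memS]
          refine ⟨hγ, ?_⟩
          rw [memA, hσγ] at hσA
          exact hσA.2
  have hApos : A ⊆ Φ.pos := Finset.filter_subset _ _
  have hDpos : D ⊆ Φ.pos := Finset.filter_subset _ _
  have hSpos : S ⊆ Φ.pos := Finset.filter_subset _ _
  -- card S = card (A \ D) + card (D \ A)
  have hcardS : S.card = ((A \ D) ∪ (D \ A)).card := by
    apply Finset.card_nbij' σ σ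
    · intro γ hγS
      have hγ : γ ∈ Φ.pos := hSpos hγS
      rcases (claim1 γ hγ).mp hγS with ⟨hγD, hσA⟩ | ⟨hγD, hσA⟩
      · exact Finset.mem_union_right _ (Finset.mem_sdiff.mpr ⟨hσD γ hγ hγD, hσA⟩)
      · refine Finset.mem_union_left _ (Finset.mem_sdiff.mpr ⟨hσA, ?_⟩)
        intro h
        exact hγD (hσD' γ hγ h)
    · intro δ hδT
      rcases Finset.mem_union.mp hδT with h | h
      · rcases Finset.mem_sdiff.mp h with ⟨hδA, hδD⟩
        have hδ : δ ∈ Φ.pos := hApos hδA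
        apply (claim1 (σ δ) (hσpos δ hδ)).mpr
        refine Or.inr ⟨fun hh => hδD (hσD' δ hδ hh), ?_⟩
        rwa [hσinvol δ hδ]
      · rcases Finset.mem_sdiff.mp h with ⟨hδD, hδA⟩
        have hδ : δ ∈ Φ.pos := hDpos hδD
        apply (claim1 (σ δ) (hσpos δ hδ)).mpr
        refine Or.inl ⟨hσD δ hδ hδD, ?_⟩
        rwa [hσinvol δ hδ]
    · intro γ hγS
      exact hσinvol γ (hSpos hγS)
    · intro δ hδT
      rcases Finset.mem_union.mp hδT with h | h
      · exact hσinvol δ (hApos (Finset.mem_sdiff.mp h).1)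
      · exact hσinvol δ (hDpos (Finset.mem_sdiff.mp h).1)
  -- the injection A ∩ D → (D \ A).erase β
  have hβA : β ∉ A := fun h => hwβ ((memA β).mp h).2
  have hβD : β ∈ D := by
    rw [memD]
    refine ⟨hβ, ?_⟩
    rw [hsβdef, rootReflection_self', neg_neg]
    exact hβ
  have hinj : (A ∩ D).card ≤ ((D \ A).erase β).card := by
    apply Finset.card_le_card_of_injOn σ
    · intro γ hγ'
      rcases Finset.mem_inter.mp hγ' with ⟨hγA, hγD⟩
      have hγ : γ ∈ Φ.pos := hApos hγA
      have hγr : γ ∈ Φ.roots := Φ.pos_subset hγ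
      have hσβ : σ β = β := by
        have : sβ β = -β := by rw [hsβdef]; exact rootReflection_self' β
        simp [hσdef, this, Φ.not_neg_pos hβ, neg_neg]
      have hne : σ γ ≠ β := by
        intro h
        have : γ = σ β := by rw [← h, hσinvol γ hγ]
        rw [hσβ] at this
        rw [this] at hγA
        exact hβA hγA
      refine Finset.mem_erase.mpr ⟨hne, Finset.mem_sdiff.mpr ⟨hσD γ hγ hγD, ?_⟩⟩
      -- σ γ ∉ A : the double application of the key lemma
      intro hσA
      have h1 : -(sβ γ) ∈ Φ.pos := ((memD γ).mp hγD).2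
      have h2 : sβ γ ∉ Φ.pos := fun h => Φ.not_neg_pos h h1
      have hσγ : σ γ = -(sβ γ) := by simp [hσdef, h2]
      have hK1 : (0:ℝ) < inner ℝ β γ := Φ.inner_pos_of_reflect_neg hβ hγ (by rw [hsβdef] at h1; exact h1)
      have hwβpos : w β ∈ Φ.pos := Φ.pos_of_not_neg (hroots β hβr) hwβ
      have hwγpos : -(w γ) ∈ Φ.pos := ((memA γ).mp hγA).2
      have hwsr : w (sβ γ) ∈ Φ.pos := by
        have h3 : -(w (σ γ)) ∈ Φ.pos := ((memA _).mp hσA).2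
        rw [hσγ, map_neg, neg_neg] at h3
        exact h3
      have hconj : rootReflection (w β) (-(w γ)) = -(w (sβ γ)) := by
        rw [map_neg, rootReflection_conj w β γ hβ0, hsβdef]
      have hK2 : (0:ℝ) < inner ℝ (w β) (-(w γ)) := by
        apply Φ.inner_pos_of_reflect_neg hwβpos hwγpos
        rw [hconj, neg_neg]
        exact hwsr
      rw [inner_neg_right, LinearIsometryEquiv.inner_map_map] at hK2
      linarith
    · intro γ₁ h₁ γ₂ h₂ h
      have e₁ : γ₁ ∈ Φ.pos := hApos (Finset.mem_inter.mp h₁).1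
      have e₂ : γ₂ ∈ Φ.pos := hApos (Finset.mem_inter.mp h₂).1
      have := congrArg σ h
      rwa [hσinvol γ₁ e₁, hσinvol γ₂ e₂] at this
  have hβDA : β ∈ D \ A := Finset.mem_sdiff.mpr ⟨hβD, hβA⟩
  have h5 : ((D \ A).erase β).card + 1 = (D \ A).card := Finset.card_erase_add_one hβDA
  have h6 : (A ∩ D).card + (A \ D).card = A.card := Finset.card_inter_add_card_sdiff A D
  have h7 : ((A \ D) ∪ (D \ A)).card = (A \ D).card + (D \ A).card := by
    apply Finset.card_union_of_disjoint
    exact disjoint_sdiff_sdiff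
  show A.card < S.card
  omega

/-- Every root system has a longest element. -/
lemma exists_longest (Φ : RootSys n) : ∃ w₀, Φ.IsLongest w₀ := by
  classical
  set V : Set ℕ := {k | ∃ w ∈ Φ.weylGroup, Φ.len w = k} with hV
  have hne : V.Nonempty := ⟨Φ.len 1, 1, one_mem _, rfl⟩
  have hbdd : BddAbove V := by
    refine ⟨Φ.pos.card, ?_⟩
    rintro k ⟨w, _, rfl⟩
    exact Finset.card_le_card (Finset.filter_subset _ _)
  obtain ⟨w₀, hw₀, hlen⟩ := Nat.sSup_mem hne hbdd
  refine ⟨w₀, hw₀, ?_⟩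
  apply Finset.Subset.antisymm (Finset.filter_subset _ _)
  intro β hβ
  by_contra h
  have h' : -(w₀ β) ∉ Φ.pos := fun hh => h (Finset.mem_filter.mpr ⟨hβ, hh⟩)
  have hlt := Φ.len_lt_mul_reflection hw₀ hβ h'
  have hmem : w₀ * rootReflection β ∈ Φ.weylGroup :=
    mul_mem hw₀ (Subgroup.subset_closure ⟨β, Φ.pos_subset hβ, rfl⟩)
  have : Φ.len (w₀ * rootReflection β) ≤ sSup V :=
    le_csSup hbdd ⟨w₀ * rootReflection β, hmem, rfl⟩
  omega

/-- The inversion set of `w₀ · w` is the complement of that of `w`. -/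
lemma invSet_longest_mul (Φ : RootSys n) {w₀ w : Esp n ≃ₗᵢ[ℝ] Esp n}
    (h₀ : Φ.IsLongest w₀) (hw : w ∈ Φ.weylGroup) :
    Φ.invSet (w₀ * w) = Φ.pos \ Φ.invSet w := by
  have hroots := Φ.weyl_maps_roots hw
  have h₀inv : ∀ γ ∈ Φ.pos, -(w₀ γ) ∈ Φ.pos := by
    intro γ hγ
    have : γ ∈ Φ.invSet w₀ := by rw [h₀.2]; exact hγ
    exact (Finset.mem_filter.mp this).2
  have h₀roots := Φ.weyl_maps_roots h₀.1
  ext γ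
  simp only [RootSys.invSet, Finset.mem_filter, Finset.mem_sdiff]
  constructor
  · rintro ⟨hγ, hne⟩
    refine ⟨hγ, ?_⟩
    rintro ⟨-, hinv⟩
    -- -(w γ) ∈ pos, so w₀(-(w γ)) is a negative root, i.e. w₀ (w γ) ∈ pos
    have h1 : -(w₀ (-(w γ))) ∈ Φ.pos := h₀inv _ hinv
    rw [map_neg, neg_neg] at h1
    have : ¬ (-(w₀ (w γ)) ∈ Φ.pos) := Φ.not_neg_pos h1
    exact this hne
  · rintro ⟨hγ, hne⟩
    refine ⟨hγ, ?_⟩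
    have hwγr : w γ ∈ Φ.roots := hroots γ (Φ.pos_subset hγ)
    have hwγpos : w γ ∈ Φ.pos := by
      apply Φ.pos_of_not_neg hwγr
      intro hh
      exact hne ⟨hγ, hh⟩
    exact h₀inv _ hwγpos

lemma mem_weyl_of_longest_mul (Φ : RootSys n) {w₀ w : Esp n ≃ₗᵢ[ℝ] Esp n}
    (h₀ : Φ.IsLongest w₀) (hw : w ∈ Φ.weylGroup) : w₀ * w ∈ Φ.weylGroup :=
  mul_mem h₀.1 hw

end RootSys

lemma Separable.mem_weylGroup' {n : ℕ} {Φ : RootSys n} {w : Esp n ≃ₗᵢ[ℝ] Esp n}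
    (h : Separable Φ w) : w ∈ Φ.weylGroup := by
  cases h with
  | rank_one _ _ hw _ => exact hw
  | reducible _ _ _ _ _ _ hw _ _ _ _ _ => exact hw
  | pivot _ _ _ _ _ hw _ _ _ _ _ _ => exact hw

/-- The main induction: any element of the Weyl group whose inversion set is the
complement of that of a separable element is itself separable. -/
lemma separable_of_compl {n : ℕ} {Φ : RootSys n} {u : Esp n ≃ₗᵢ[ℝ] Esp n}
    (hsep : Separable Φ u) :
    ∀ v : Esp n ≃ₗᵢ[ℝ] Esp n, v ∈ Φ.weylGroup →
      Φ.invSet v = Φ.pos \ Φ.invSet u → Separable Φ v := by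
  induction hsep with
  | rank_one Φ w hw hrk =>
    intro v hv _
    exact Separable.rank_one Φ v hv hrk
  | reducible Φ Φ₁ Φ₂ w u₁ u₂ hw hd h₁ h₂ s₁ s₂ ih₁ ih₂ =>
    intro v hv hinv
    obtain ⟨z₁, hz₁⟩ := Φ₁.exists_longest
    obtain ⟨z₂, hz₂⟩ := Φ₂.exists_longest
    have hv₁w : z₁ * u₁ ∈ Φ₁.weylGroup := mul_mem hz₁.1 h₁.1
    have hv₂w : z₂ * u₂ ∈ Φ₂.weylGroup := mul_mem hz₂.1 h₂.1
    have hv₁inv : Φ₁.invSet (z₁ * u₁) = Φ₁.pos \ Φ₁.invSet u₁ :=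
      Φ₁.invSet_longest_mul hz₁ h₁.1
    have hv₂inv : Φ₂.invSet (z₂ * u₂) = Φ₂.pos \ Φ₂.invSet u₂ :=
      Φ₂.invSet_longest_mul hz₂ h₂.1
    have hpos₁ : Φ₁.pos ⊆ Φ.pos := by
      rw [hd.2.2.2.2]; exact Finset.subset_union_left
    have hpos₂ : Φ₂.pos ⊆ Φ.pos := by
      rw [hd.2.2.2.2]; exact Finset.subset_union_right
    refine Separable.reducible Φ Φ₁ Φ₂ v (z₁ * u₁) (z₂ * u₂) hv hd
      ⟨hv₁w, ?_⟩ ⟨hv₂w, ?_⟩ (ih₁ _ hv₁w hv₁inv) (ih₂ _ hv₂w hv₂inv)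
    · rw [hv₁inv, hinv, h₁.2]
      ext γ
      simp only [Finset.mem_sdiff, Finset.mem_inter]
      constructor
      · rintro ⟨h1, h2⟩
        exact ⟨⟨hpos₁ h1, fun hI => h2 ⟨hI, h1⟩⟩, h1⟩
      · rintro ⟨⟨h1, h2⟩, h3⟩
        exact ⟨h3, fun hI => h2 hI.1⟩
    · rw [hv₂inv, hinv, h₂.2]
      ext γ
      simp only [Finset.mem_sdiff, Finset.mem_inter]
      constructor
      · rintro ⟨h1, h2⟩
        exact ⟨⟨hpos₂ h1, fun hI => h2 ⟨hI, h1⟩⟩, h1⟩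
      · rintro ⟨⟨h1, h2⟩, h3⟩
        exact ⟨h3, fun hI => h2 hI.1⟩
  | pivot Φ Φ' w u' α hw hirr hα hpar hres hsep' hcond ih =>
    intro v hv hinv
    obtain ⟨z', hz'⟩ := Φ'.exists_longest
    have hv'w : z' * u' ∈ Φ'.weylGroup := mul_mem hz'.1 hres.1
    have hv'inv : Φ'.invSet (z' * u') = Φ'.pos \ Φ'.invSet u' :=
      Φ'.invSet_longest_mul hz' hres.1
    have hpos' : Φ'.pos ⊆ Φ.pos := by
      rw [hpar.2]; exact Finset.filter_subset _ _
    refine Separable.pivot Φ Φ' v (z' * u') α hv hirr hα hpar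
      ⟨hv'w, ?_⟩ (ih _ hv'w hv'inv) ?_
    · rw [hv'inv, hinv, hres.2]
      ext γ
      simp only [Finset.mem_sdiff, Finset.mem_inter]
      constructor
      · rintro ⟨h1, h2⟩
        exact ⟨⟨hpos' h1, fun hI => h2 ⟨hI, h1⟩⟩, h1⟩
      · rintro ⟨⟨h1, h2⟩, h3⟩
        exact ⟨h3, fun hI => h2 hI.1⟩
    · rcases hcond with hsub | hdisj
      · refine Or.inr ?_
        intro β hβ
        rw [hinv]
        intro hh
        exact (Finset.mem_sdiff.mp hh).2 (hsub hβ)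
      · refine Or.inl ?_
        intro β hβ
        rw [hinv]
        refine Finset.mem_sdiff.mpr ⟨Finset.mem_of_mem_filter β hβ, hdisj β hβ⟩

end Aux

/-- **Proposition.** If `w` is separable and `w₀` is the longest element of `W(Φ)`,
then `w₀ · w` is also separable. -/
theorem separable_w0_mul {n : ℕ} (Φ : RootSys n) (w w₀ : Esp n ≃ₗᵢ[ℝ] Esp n)
    (hsep : Separable Φ w) (h₀ : Φ.IsLongest w₀) :
    Separable Φ (w₀ * w) := by
  have hw : w ∈ Φ.weylGroup := hsep.mem_weylGroup'
  exact separable_of_compl hsep (w₀ * w) (mul_mem h₀.1 hw) (Φ.invSet_longest_mul h₀ hw)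
end
end

section
/- Let Φ be a simply-laced irreducible finite crystallographic root system that is not of type A, let r ∈ Φ⁺ have full support (Supp(r) = Δ), and let α_i ∈ Δ be any simple root. Then at least one of the following holds: (1) r = β₁ + β₂ for some β₁, β₂ ∈ Φ⁺ with α_i ∈ Supp(β₁) and α_i ∈ Supp(β₂); or (2) r = α + β + γ for some α, β, γ ∈ Φ⁺ with (α,β) = (β,γ) = −1 and (α,γ) = 0 (so α, β, γ span a type A₃ subsystem as simple roots), and α_i ∈ Supp(β). -/
open scoped Classical
open Polynomial
noncomputable section

section FSDAux

variable {n : ℕ} {Φ : RootSys n}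

local notation "⟪" x ", " y "⟫" => (inner ℝ x y : ℝ)

lemma fsd_ip_int (hnorm : ∀ α ∈ Φ.roots, (inner ℝ α α : ℝ) = 2)
    {u v : Esp n} (hu : u ∈ Φ.roots) (hv : v ∈ Φ.roots) :
    ∃ k : ℤ, ⟪u, v⟫ = (k : ℝ) := by
  obtain ⟨k, hk⟩ := Φ.crystal u hu v hv
  rw [hnorm u hu] at hk
  exact ⟨k, by linarith [hk]⟩

lemma fsd_eq_of_ip_two (hnorm : ∀ α ∈ Φ.roots, (inner ℝ α α : ℝ) = 2)
    {u v : Esp n} (hu : u ∈ Φ.roots) (hv : v ∈ Φ.roots) (h : ⟪u, v⟫ = 2) : u = v := by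
  have h0 : ⟪u - v, u - v⟫ = 0 := by
    rw [inner_sub_sub_self]
    have h3 : ⟪v, u⟫ = 2 := by rw [real_inner_comm]; exact h
    simp only [hnorm u hu, hnorm v hv, h, h3]; ring
  exact sub_eq_zero.mp (inner_self_eq_zero.mp h0)

lemma fsd_eq_neg_of_ip_negtwo (hnorm : ∀ α ∈ Φ.roots, (inner ℝ α α : ℝ) = 2)
    {u v : Esp n} (hu : u ∈ Φ.roots) (hv : v ∈ Φ.roots) (h : ⟪u, v⟫ = -2) : u = -v := by
  have h0 : ⟪u + v, u + v⟫ = 0 := by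
    rw [inner_add_add_self]
    have h3 : ⟪v, u⟫ = -2 := by rw [real_inner_comm]; exact h
    simp only [hnorm u hu, hnorm v hv, h, h3]; ring
  have := inner_self_eq_zero.mp h0
  have : u = -v := by
    have := add_eq_zero_iff_eq_neg.mp this
    exact this
  exact this

lemma fsd_ip_cases (hnorm : ∀ α ∈ Φ.roots, (inner ℝ α α : ℝ) = 2)
    {u v : Esp n} (hu : u ∈ Φ.roots) (hv : v ∈ Φ.roots) :
    ⟪u, v⟫ = -2 ∨ ⟪u, v⟫ = -1 ∨ ⟪u, v⟫ = 0 ∨ ⟪u, v⟫ = 1 ∨ ⟪u, v⟫ = 2 := by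
  obtain ⟨k, hk⟩ := fsd_ip_int hnorm hu hv
  have habs : |⟪u, v⟫| ≤ 2 := by
    have h1 := abs_real_inner_le_norm u v
    have hu2 : ‖u‖ ^ 2 = 2 := by
      rw [← real_inner_self_eq_norm_sq]; exact hnorm u hu
    have hv2 : ‖v‖ ^ 2 = 2 := by
      rw [← real_inner_self_eq_norm_sq]; exact hnorm v hv
    nlinarith [norm_nonneg u, norm_nonneg v, mul_nonneg (norm_nonneg u) (norm_nonneg v)]
  rw [hk] at habs ⊢
  rw [abs_le] at habs
  have hk1 : (-2 : ℤ) ≤ k := by exact_mod_cast habs.1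
  have hk2 : k ≤ 2 := by exact_mod_cast habs.2
  interval_cases k <;> norm_num

/-- For roots that are not equal and not negatives, the inner ℝ product is -1, 0, or 1. -/
lemma fsd_ip_small (hnorm : ∀ α ∈ Φ.roots, (inner ℝ α α : ℝ) = 2)
    {u v : Esp n} (hu : u ∈ Φ.roots) (hv : v ∈ Φ.roots) (hne : u ≠ v) (hne' : u ≠ -v) :
    ⟪u, v⟫ = -1 ∨ ⟪u, v⟫ = 0 ∨ ⟪u, v⟫ = 1 := by
  rcases fsd_ip_cases hnorm hu hv with h | h | h | h | h
  · exact absurd (fsd_eq_neg_of_ip_negtwo hnorm hu hv h) hne'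
  · exact Or.inl h
  · exact Or.inr (Or.inl h)
  · exact Or.inr (Or.inr h)
  · exact absurd (fsd_eq_of_ip_two hnorm hu hv h) hne

lemma fsd_reflection_apply {α : Esp n} (hα : (inner ℝ α α : ℝ) = 2) (v : Esp n) :
    rootReflection α v = v - ⟪α, v⟫ • α := by
  unfold rootReflection
  rw [Submodule.reflection_apply, Submodule.starProjection_orthogonal_val,
    Submodule.starProjection_singleton]
  have hn : ‖α‖ ^ 2 = 2 := by rw [← real_inner_self_eq_norm_sq]; exact hα
  rw [hn, two_smul]
  match_scalars <;> ring

end FSDAux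
section FSDAux2

variable {n : ℕ} {Φ : RootSys n}

local notation "⟪" x ", " y "⟫" => (inner ℝ x y : ℝ)

lemma fsd_add_root (hnorm : ∀ α ∈ Φ.roots, (inner ℝ α α : ℝ) = 2)
    {u v : Esp n} (hu : u ∈ Φ.roots) (hv : v ∈ Φ.roots) (h : ⟪u, v⟫ = -1) :
    u + v ∈ Φ.roots := by
  have := Φ.reflect_mem u hu v hv
  rw [fsd_reflection_apply (hnorm u hu), h] at this
  simpa [sub_eq_add_neg, add_comm] using this

lemma fsd_sub_root (hnorm : ∀ α ∈ Φ.roots, (inner ℝ α α : ℝ) = 2)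
    {u v : Esp n} (hu : u ∈ Φ.roots) (hv : v ∈ Φ.roots) (h : ⟪u, v⟫ = 1) :
    u - v ∈ Φ.roots := by
  have := Φ.reflect_mem v hv u hu
  rw [fsd_reflection_apply (hnorm v hv), real_inner_comm, h] at this
  simpa using this

lemma fsd_pos_not_neg {u : Esp n} (hu : u ∈ Φ.pos) : -u ∉ Φ.pos :=
  (Φ.pos_iff u (Φ.pos_subset hu)).mp hu

lemma fsd_neg_pos {u : Esp n} (hu : u ∈ Φ.roots) (h : u ∉ Φ.pos) : -u ∈ Φ.pos := by
  have := (Φ.pos_iff (-u) (Φ.neg_mem u hu))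
  rw [neg_neg] at this
  exact this.mpr h

lemma fsd_pos_ne_neg {u v : Esp n} (hu : u ∈ Φ.pos) (hv : v ∈ Φ.pos) : u ≠ -v := by
  intro h
  exact fsd_pos_not_neg hv (h ▸ hu)

lemma fsd_add_pos (hnorm : ∀ α ∈ Φ.roots, (inner ℝ α α : ℝ) = 2)
    {u v : Esp n} (hu : u ∈ Φ.pos) (hv : v ∈ Φ.pos) (h : ⟪u, v⟫ = -1) :
    u + v ∈ Φ.pos :=
  Φ.pos_add u hu v hv (fsd_add_root hnorm (Φ.pos_subset hu) (Φ.pos_subset hv) h)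

lemma fsd_simple_mem_pos {s : Esp n} (hs : s ∈ Φ.simples) : s ∈ Φ.pos :=
  (Finset.mem_filter.mp hs).1

lemma fsd_simple_not_decomp {s : Esp n} (hs : s ∈ Φ.simples) :
    ¬ ∃ β ∈ Φ.pos, ∃ γ ∈ Φ.pos, s = β + γ :=
  (Finset.mem_filter.mp hs).2

lemma fsd_decomp {u : Esp n} (hu : u ∈ Φ.pos) (h : u ∉ Φ.simples) :
    ∃ β ∈ Φ.pos, ∃ γ ∈ Φ.pos, u = β + γ := by
  by_contra hc
  exact h (Finset.mem_filter.mpr ⟨hu, hc⟩)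

/-- distinct simple roots have inner ℝ product 0 or -1 -/
lemma fsd_simple_pair (hnorm : ∀ α ∈ Φ.roots, (inner ℝ α α : ℝ) = 2)
    {s t : Esp n} (hs : s ∈ Φ.simples) (ht : t ∈ Φ.simples) (hne : s ≠ t) :
    ⟪s, t⟫ = 0 ∨ ⟪s, t⟫ = -1 := by
  have hsp := fsd_simple_mem_pos hs
  have htp := fsd_simple_mem_pos ht
  have hsr := Φ.pos_subset hsp
  have htr := Φ.pos_subset htp
  rcases fsd_ip_small hnorm hsr htr hne (fsd_pos_ne_neg hsp htp) with h | h | h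
  · exact Or.inr h
  · exact Or.inl h
  · exfalso
    have hsub := fsd_sub_root hnorm hsr htr h
    by_cases hmem : s - t ∈ Φ.pos
    · exact fsd_simple_not_decomp hs ⟨t, htp, s - t, hmem, by abel⟩
    · have : t - s ∈ Φ.pos := by
        have := fsd_neg_pos hsub hmem
        simpa using this
      exact fsd_simple_not_decomp ht ⟨s, hsp, t - s, this, by abel⟩

/-- subtracting a simple root with inner ℝ product 1 from a positive root stays positive -/
lemma fsd_sub_simple_pos (hnorm : ∀ α ∈ Φ.roots, (inner ℝ α α : ℝ) = 2)
    {u s : Esp n} (hu : u ∈ Φ.pos) (hs : s ∈ Φ.simples) (hne : u ≠ s) (h : ⟪u, s⟫ = 1) :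
    u - s ∈ Φ.pos := by
  have hsp := fsd_simple_mem_pos hs
  have hsub := fsd_sub_root hnorm (Φ.pos_subset hu) (Φ.pos_subset hsp) h
  by_cases hmem : u - s ∈ Φ.pos
  · exact hmem
  · exfalso
    have : s - u ∈ Φ.pos := by
      have := fsd_neg_pos hsub hmem
      simpa using this
    exact fsd_simple_not_decomp hs ⟨u, hu, s - u, this, by abel⟩

end FSDAux2
section FSDAux3

variable {n : ℕ} {Φ : RootSys n}

local notation "⟪" x ", " y "⟫" => (inner ℝ x y : ℝ)

/-- the sum of all positive roots -/
def fsdRho (Φ : RootSys n) : Esp n := ∑ γ ∈ Φ.pos, γ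

lemma fsd_sigma_root (hnorm : ∀ α ∈ Φ.roots, (inner ℝ α α : ℝ) = 2)
    {u v : Esp n} (hu : u ∈ Φ.roots) (hv : v ∈ Φ.roots) :
    v - ⟪u, v⟫ • u ∈ Φ.roots := by
  have := Φ.reflect_mem u hu v hv
  rwa [fsd_reflection_apply (hnorm u hu)] at this

lemma fsd_int_sum {s : Finset (Esp n)} {f : Esp n → ℝ}
    (h : ∀ x ∈ s, ∃ k : ℤ, f x = (k : ℝ)) : ∃ k : ℤ, ∑ x ∈ s, f x = (k : ℝ) := by
  classical
  induction s using Finset.induction_on with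
  | empty => exact ⟨0, by simp⟩
  | @insert a s' hx ih =>
    obtain ⟨k₁, hk₁⟩ := h a (Finset.mem_insert_self a s')
    obtain ⟨k₂, hk₂⟩ := ih fun x hxs => h x (Finset.mem_insert_of_mem hxs)
    exact ⟨k₁ + k₂, by rw [Finset.sum_insert hx, hk₁, hk₂]; push_cast; ring⟩

lemma fsd_rho_int (hnorm : ∀ α ∈ Φ.roots, (inner ℝ α α : ℝ) = 2)
    {u : Esp n} (hu : u ∈ Φ.roots) : ∃ k : ℤ, ⟪fsdRho Φ, u⟫ = (k : ℝ) := by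
  rw [fsdRho, sum_inner]
  exact fsd_int_sum fun γ hγ => fsd_ip_int hnorm (Φ.pos_subset hγ) hu

/-- KEY: the sum of all positive roots pairs to at least 2 with every positive root. -/
lemma fsd_rho_ge_two (hnorm : ∀ α ∈ Φ.roots, (inner ℝ α α : ℝ) = 2)
    {u : Esp n} (hu : u ∈ Φ.pos) : 2 ≤ ⟪fsdRho Φ, u⟫ := by
  classical
  have hur := Φ.pos_subset hu
  have huu : ⟪u, u⟫ = 2 := hnorm u hur
  rw [fsdRho, sum_inner]
  rw [← Finset.add_sum_erase _ _ hu, huu]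
  set s := Φ.pos.erase u with hs
  have hsub : ∀ γ ∈ s, γ ∈ Φ.pos ∧ γ ≠ u := by
    intro γ hγ
    exact ⟨Finset.mem_of_mem_erase hγ, Finset.ne_of_mem_erase hγ⟩
  set σ : Esp n → Esp n := fun γ => γ - ⟪u, γ⟫ • u with hσ
  have hσroot : ∀ γ ∈ s, σ γ ∈ Φ.roots := fun γ hγ =>
    fsd_sigma_root hnorm hur (Φ.pos_subset (hsub γ hγ).1)
  have hσinv : ∀ γ, σ (σ γ) = γ := by
    intro γ
    simp only [hσ]
    rw [inner_sub_right, real_inner_smul_right, huu]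
    match_scalars <;> ring
  have hXone : ∀ γ ∈ s, σ γ ∉ Φ.pos → ⟪γ, u⟫ = 1 := by
    intro γ hγ hσγ
    obtain ⟨hγp, hγne⟩ := hsub γ hγ
    have hγr := Φ.pos_subset hγp
    have hneg : -(σ γ) ∈ Φ.pos := fsd_neg_pos (hσroot γ hγ) hσγ
    rcases fsd_ip_small hnorm hγr hur hγne (fsd_pos_ne_neg hγp hu) with h | h | h
    · exfalso
      have h' : ⟪u, γ⟫ = -1 := by rw [real_inner_comm]; exact h
      have : -(σ γ) = -(γ + u) := by simp only [hσ, h']; module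
      rw [this] at hneg
      have hsum : γ + -(γ + u) ∈ Φ.roots := by
        have : γ + -(γ + u) = -u := by abel
        rw [this]; exact Φ.neg_mem u hur
      have := Φ.pos_add γ hγp _ hneg hsum
      have h2 : γ + -(γ + u) = -u := by abel
      rw [h2] at this
      exact fsd_pos_not_neg hu this
    · exfalso
      have h' : ⟪u, γ⟫ = 0 := by rw [real_inner_comm]; exact h
      have : -(σ γ) = -γ := by simp only [hσ, h']; module
      rw [this] at hneg
      exact fsd_pos_not_neg hγp hneg
    · exact h
  -- split s into F and X
  have hkey : 0 ≤ ∑ γ ∈ s, ⟪γ, u⟫ := by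
    rw [← Finset.sum_filter_add_sum_filter_not s (fun γ => σ γ ∈ Φ.pos)]
    have hF : ∑ γ ∈ s.filter (fun γ => σ γ ∈ Φ.pos), ⟪γ, u⟫ = 0 := by
      apply Finset.sum_involution (fun γ _ => σ γ)
      · intro γ hγ
        simp only [hσ]
        rw [inner_sub_left, real_inner_smul_left, huu, real_inner_comm u γ]
        ring
      · intro γ hγ hne heq
        apply hne
        have h0 : ⟪u, γ⟫ • u = 0 := by
          have h1 : ⟪u, γ⟫ • u = γ - σ γ := by simp only [hσ]; abel
          rw [h1, heq]; abel
        rcases smul_eq_zero.mp h0 with h | h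
        · rw [real_inner_comm]; exact h
        · exact absurd h (Φ.ne_zero u hur)
      · intro γ hγ
        obtain ⟨hγs, hγpos⟩ := Finset.mem_filter.mp hγ
        obtain ⟨hγp, hγne⟩ := hsub γ hγs
        refine Finset.mem_filter.mpr ⟨Finset.mem_erase.mpr ⟨?_, hγpos⟩, ?_⟩
        · intro heq
          have : γ = σ u := by rw [← heq, hσinv]
          have hσu : σ u = -u := by simp only [hσ, huu]; module
          rw [hσu] at this
          exact fsd_pos_ne_neg hγp hu this
        · rw [hσinv]; exact hγp
      · intro γ hγ; exact hσinv γ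
    rw [hF, zero_add]
    apply Finset.sum_nonneg
    intro γ hγ
    obtain ⟨hγs, hγnpos⟩ := Finset.mem_filter.mp hγ
    rw [hXone γ hγs hγnpos]
    norm_num
  linarith

end FSDAux3
section FSDAux4

variable {n : ℕ} {Φ : RootSys n}

local notation "⟪" x ", " y "⟫" => (inner ℝ x y : ℝ)

/-- a vanishing real combination of the simple roots has all coefficients zero -/
lemma fsd_rel_zero (hnorm : ∀ α ∈ Φ.roots, (inner ℝ α α : ℝ) = 2)
    {d : Esp n → ℝ} (hrel : ∑ γ ∈ Φ.simples, d γ • γ = 0) :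
    ∀ γ ∈ Φ.simples, d γ = 0 := by
  classical
  set s := Φ.simples with hs
  set Pp := s.filter (fun γ => 0 < d γ) with hPp
  set Pn := s.filter (fun γ => d γ < 0) with hPn
  set u := ∑ γ ∈ Pp, d γ • γ with hu
  set v := ∑ γ ∈ Pn, (-(d γ)) • γ with hv
  have huv : u = v := by
    have hsplit : ∑ γ ∈ s, d γ • γ =
        ∑ γ ∈ Pp, d γ • γ + ∑ γ ∈ s.filter (fun γ => ¬ 0 < d γ), d γ • γ := by
      rw [Finset.sum_filter_add_sum_filter_not]
    have hsplit2 : ∑ γ ∈ s.filter (fun γ => ¬ 0 < d γ), d γ • γ =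
        ∑ γ ∈ (s.filter (fun γ => ¬ 0 < d γ)).filter (fun γ => d γ < 0), d γ • γ +
        ∑ γ ∈ (s.filter (fun γ => ¬ 0 < d γ)).filter (fun γ => ¬ d γ < 0), d γ • γ := by
      rw [Finset.sum_filter_add_sum_filter_not]
    have hz : ∑ γ ∈ (s.filter (fun γ => ¬ 0 < d γ)).filter (fun γ => ¬ d γ < 0), d γ • γ = 0 := by
      apply Finset.sum_eq_zero
      intro γ hγ
      have h1 := (Finset.mem_filter.mp hγ).2
      have h2 := (Finset.mem_filter.mp (Finset.mem_filter.mp hγ).1).2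
      have : d γ = 0 := by linarith
      rw [this, zero_smul]
    have hff : (s.filter (fun γ => ¬ 0 < d γ)).filter (fun γ => d γ < 0) = Pn := by
      rw [Finset.filter_filter, hPn]
      apply Finset.filter_congr
      intro γ _
      constructor
      · rintro ⟨_, h⟩; exact h
      · intro h; exact ⟨by linarith, h⟩
    rw [hsplit2, hff, hz, add_zero] at hsplit
    rw [hrel] at hsplit
    have hPnv : ∑ γ ∈ Pn, d γ • γ = -v := by
      rw [hv, ← Finset.sum_neg_distrib]
      apply Finset.sum_congr rfl
      intro γ _
      rw [neg_smul, neg_neg]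
    rw [hPnv] at hsplit
    exact (add_neg_eq_zero.mp hsplit.symm)
  have hinner : ⟪u, u⟫ ≤ 0 := by
    nth_rewrite 2 [huv]
    rw [hu, hv, sum_inner]
    apply Finset.sum_nonpos
    intro γ hγ
    rw [real_inner_smul_left]
    have hd := (Finset.mem_filter.mp hγ).2
    apply mul_nonpos_of_nonneg_of_nonpos (le_of_lt hd)
    rw [inner_sum]
    apply Finset.sum_nonpos
    intro δ hδ
    rw [real_inner_smul_right]
    have hdδ := (Finset.mem_filter.mp hδ).2
    apply mul_nonpos_of_nonneg_of_nonpos (by linarith)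
    have hγs := (Finset.mem_filter.mp hγ).1
    have hδs := (Finset.mem_filter.mp hδ).1
    have hne : γ ≠ δ := by
      intro heq
      rw [heq] at hd
      linarith
    rcases fsd_simple_pair hnorm hγs hδs hne with h | h <;> rw [h] <;> norm_num
  have hu0 : u = 0 := by
    have h1 : ⟪u, u⟫ = 0 := le_antisymm hinner real_inner_self_nonneg
    exact inner_self_eq_zero.mp h1
  have hv0 : v = 0 := huv ▸ hu0
  have hPpe : Pp = ∅ := by
    by_contra hne
    obtain ⟨γ₀, hγ₀⟩ := Finset.nonempty_of_ne_empty hne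
    have h0 : ⟪fsdRho Φ, u⟫ = 0 := by rw [hu0, inner_zero_right]
    rw [hu, inner_sum] at h0
    have hpos : 0 < ∑ γ ∈ Pp, ⟪fsdRho Φ, d γ • γ⟫ := by
      apply Finset.sum_pos
      · intro γ hγ
        rw [real_inner_smul_right]
        have hd := (Finset.mem_filter.mp hγ).2
        have h2 := fsd_rho_ge_two hnorm (fsd_simple_mem_pos (Finset.mem_filter.mp hγ).1)
        nlinarith
      · exact ⟨γ₀, hγ₀⟩
    linarith
  have hPne : Pn = ∅ := by
    by_contra hne
    obtain ⟨γ₀, hγ₀⟩ := Finset.nonempty_of_ne_empty hne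
    have h0 : ⟪fsdRho Φ, v⟫ = 0 := by rw [hv0, inner_zero_right]
    rw [hv, inner_sum] at h0
    have hpos : 0 < ∑ γ ∈ Pn, ⟪fsdRho Φ, (-(d γ)) • γ⟫ := by
      apply Finset.sum_pos
      · intro γ hγ
        rw [real_inner_smul_right]
        have hd := (Finset.mem_filter.mp hγ).2
        have h2 := fsd_rho_ge_two hnorm (fsd_simple_mem_pos (Finset.mem_filter.mp hγ).1)
        nlinarith
      · exact ⟨γ₀, hγ₀⟩
    linarith
  intro γ hγ
  by_contra hne
  rcases lt_or_gt_of_ne hne with h | h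
  · have : γ ∈ Pn := Finset.mem_filter.mpr ⟨hγ, h⟩
    rw [hPne] at this
    exact absurd this (Finset.notMem_empty γ)
  · have : γ ∈ Pp := Finset.mem_filter.mpr ⟨hγ, h⟩
    rw [hPpe] at this
    exact absurd this (Finset.notMem_empty γ)

/-- uniqueness of expansions over the simple roots -/
lemma fsd_coeff_unique (hnorm : ∀ α ∈ Φ.roots, (inner ℝ α α : ℝ) = 2)
    {a b : Esp n → ℝ}
    (hab : ∑ γ ∈ Φ.simples, a γ • γ = ∑ γ ∈ Φ.simples, b γ • γ) :
    ∀ γ ∈ Φ.simples, a γ = b γ := by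
  have h0 : ∑ γ ∈ Φ.simples, (a γ - b γ) • γ = 0 := by
    simp only [sub_smul]
    rw [Finset.sum_sub_distrib, hab, sub_self]
  intro γ hγ
  have := fsd_rel_zero hnorm h0 γ hγ
  linarith

end FSDAux4
section FSDAux5

variable {n : ℕ} {Φ : RootSys n}

local notation "⟪" x ", " y "⟫" => (inner ℝ x y : ℝ)

lemma fsd_nat_expansion_aux (hnorm : ∀ α ∈ Φ.roots, (inner ℝ α α : ℝ) = 2) (N : ℕ) :
    ∀ u ∈ Φ.pos, ⟪fsdRho Φ, u⟫ ≤ (N : ℝ) →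
    ∃ d : Esp n → ℕ, u = ∑ γ ∈ Φ.simples, (d γ : ℝ) • γ := by
  classical
  induction N using Nat.strong_induction_on with
  | _ N ih =>
    intro u hu hle
    by_cases hus : u ∈ Φ.simples
    · refine ⟨fun γ => if γ = u then 1 else 0, ?_⟩
      have hcong : ∀ γ ∈ Φ.simples,
          (if γ = u then (1:ℝ) else 0) • γ = if γ = u then γ else 0 := by
        intro γ _
        split <;> simp
      have hgoal : u = ∑ γ ∈ Φ.simples, (((if γ = u then (1:ℕ) else 0) : ℕ) : ℝ) • γ := by
        simp only [Nat.cast_ite, Nat.cast_one, Nat.cast_zero]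
        rw [Finset.sum_congr rfl hcong, Finset.sum_ite_eq' Φ.simples u (fun γ => γ)]
        simp [hus]
      exact hgoal
    · obtain ⟨v, hv, w, hw, huvw⟩ := fsd_decomp hu hus
      have h2v := fsd_rho_ge_two hnorm hv
      have h2w := fsd_rho_ge_two hnorm hw
      have hsum : ⟪fsdRho Φ, u⟫ = ⟪fsdRho Φ, v⟫ + ⟪fsdRho Φ, w⟫ := by
        rw [huvw, inner_add_right]
      have hN2 : 2 ≤ N := by
        have h2 : (2:ℝ) ≤ (N:ℝ) := by linarith
        exact_mod_cast h2
      have hlt : N - 2 < N := by omega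
      have hcast : ((N - 2 : ℕ) : ℝ) = (N : ℝ) - 2 := by
        rw [Nat.cast_sub hN2]; norm_num
      have hvle : ⟪fsdRho Φ, v⟫ ≤ ((N - 2 : ℕ) : ℝ) := by rw [hcast]; linarith
      have hwle : ⟪fsdRho Φ, w⟫ ≤ ((N - 2 : ℕ) : ℝ) := by rw [hcast]; linarith
      obtain ⟨dv, hdv⟩ := ih (N - 2) hlt v hv hvle
      obtain ⟨dw, hdw⟩ := ih (N - 2) hlt w hw hwle
      refine ⟨fun γ => dv γ + dw γ, ?_⟩
      rw [huvw, hdv, hdw, ← Finset.sum_add_distrib]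
      apply Finset.sum_congr rfl
      intro γ _
      push_cast
      rw [add_smul]

lemma fsd_pos_nat_expansion (hnorm : ∀ α ∈ Φ.roots, (inner ℝ α α : ℝ) = 2)
    {u : Esp n} (hu : u ∈ Φ.pos) :
    ∃ d : Esp n → ℕ, u = ∑ γ ∈ Φ.simples, (d γ : ℝ) • γ := by
  obtain ⟨k, hk⟩ := fsd_rho_int hnorm (Φ.pos_subset hu)
  apply fsd_nat_expansion_aux hnorm k.toNat u hu
  rw [hk]
  exact_mod_cast Int.self_le_toNat k

/-- any real expansion of a positive root has natural-number coefficients -/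
lemma fsd_coeff_nat (hnorm : ∀ α ∈ Φ.roots, (inner ℝ α α : ℝ) = 2)
    {u : Esp n} (hu : u ∈ Φ.pos) {c : Esp n → ℝ}
    (hc : u = ∑ γ ∈ Φ.simples, c γ • γ) :
    ∀ γ ∈ Φ.simples, ∃ k : ℕ, c γ = (k : ℝ) := by
  obtain ⟨d, hd⟩ := fsd_pos_nat_expansion hnorm hu
  intro γ hγ
  refine ⟨d γ, ?_⟩
  exact fsd_coeff_unique hnorm (hc.symm.trans hd) γ hγ

end FSDAux5
section FSDAux6

variable {n : ℕ} {Φ : RootSys n}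

local notation "⟪" x ", " y "⟫" => (inner ℝ x y : ℝ)

/-- Goal (1): decomposition into two positive roots both supported on `αi`. -/
def fsdGoal1 (Φ : RootSys n) (αi u : Esp n) : Prop :=
  ∃ β₁ ∈ Φ.pos, ∃ β₂ ∈ Φ.pos, u = β₁ + β₂ ∧
    Φ.SuppContains αi β₁ ∧ Φ.SuppContains αi β₂

/-- Goal (2): an `A₃` decomposition with middle supported on `αi`. -/
def fsdGoal2 (Φ : RootSys n) (αi u : Esp n) : Prop :=
  ∃ α ∈ Φ.pos, ∃ β ∈ Φ.pos, ∃ γ ∈ Φ.pos,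
    (inner ℝ α β : ℝ) = -1 ∧ (inner ℝ β γ : ℝ) = -1 ∧ (inner ℝ α γ : ℝ) = 0 ∧
    u = α + β + γ ∧ Φ.SuppContains αi β

/-- Goal (3): `u` is the sum of a chain (path) of distinct simple roots ending at `αi`. -/
def fsdGoal3 (Φ : RootSys n) (αi u : Esp n) : Prop :=
  ∃ m : ℕ, ∃ w : ℕ → Esp n,
    (∀ k, k ≤ m → w k ∈ Φ.simples) ∧
    u = ∑ k ∈ Finset.range (m + 1), w k ∧
    (∀ k, k + 1 ≤ m → (inner ℝ (w k) (w (k + 1)) : ℝ) = -1) ∧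
    (∀ k l, l ≤ m → k + 2 ≤ l → (inner ℝ (w k) (w l) : ℝ) = 0) ∧
    w m = αi

lemma fsd_ip_ge_neg_one (hnorm : ∀ α ∈ Φ.roots, (inner ℝ α α : ℝ) = 2)
    {v x : Esp n} (hv : v ∈ Φ.pos) (hx : x ∈ Φ.pos) : -1 ≤ ⟪v, x⟫ := by
  rcases fsd_ip_cases hnorm (Φ.pos_subset hv) (Φ.pos_subset hx) with h | h | h | h | h
  · exact absurd (fsd_eq_neg_of_ip_negtwo hnorm (Φ.pos_subset hv) (Φ.pos_subset hx) h)
      (fsd_pos_ne_neg hv hx)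
  · rw [h]
  all_goals (rw [h]; norm_num)

lemma fsd_supp_of_nat {αi u : Esp n} {d : Esp n → ℕ}
    (hd : u = ∑ γ ∈ Φ.simples, (d γ : ℝ) • γ) (h1 : 1 ≤ d αi) :
    Φ.SuppContains αi u := by
  refine ⟨fun γ => (d γ : ℝ), hd, ?_⟩
  have : (1 : ℝ) ≤ (d αi : ℝ) := by exact_mod_cast h1
  linarith

lemma fsd_supp_coeff (hnorm : ∀ α ∈ Φ.roots, (inner ℝ α α : ℝ) = 2)
    {αi : Esp n} (hαi : αi ∈ Φ.simples) {β : Esp n}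
    (hs : Φ.SuppContains αi β) {d : Esp n → ℕ}
    (hd : β = ∑ γ ∈ Φ.simples, (d γ : ℝ) • γ) : 1 ≤ d αi := by
  obtain ⟨c, hc, hcne⟩ := hs
  have := fsd_coeff_unique hnorm (hc.symm.trans hd) αi hαi
  by_contra h
  have h0 : d αi = 0 := by omega
  rw [h0] at this
  simp at this
  exact hcne this

/-- adding a positive root to a root supported on `αi` keeps it supported -/
lemma fsd_supp_add (hnorm : ∀ α ∈ Φ.roots, (inner ℝ α α : ℝ) = 2)
    {αi : Esp n} (hαi : αi ∈ Φ.simples) {β₁ β₂ : Esp n}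
    (hβ₁ : β₁ ∈ Φ.pos) (hβ₂ : β₂ ∈ Φ.pos) (hs : Φ.SuppContains αi β₁) :
    Φ.SuppContains αi (β₁ + β₂) := by
  obtain ⟨d₁, hd₁⟩ := fsd_pos_nat_expansion hnorm hβ₁
  obtain ⟨d₂, hd₂⟩ := fsd_pos_nat_expansion hnorm hβ₂
  have h1 := fsd_supp_coeff hnorm hαi hs hd₁
  have hsum : β₁ + β₂ = ∑ γ ∈ Φ.simples, ((d₁ γ + d₂ γ : ℕ) : ℝ) • γ := by
    rw [hd₁, hd₂, ← Finset.sum_add_distrib]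
    apply Finset.sum_congr rfl
    intro γ _
    push_cast
    rw [add_smul]
  have hge : 1 ≤ d₁ αi + d₂ αi := by omega
  exact fsd_supp_of_nat (d := fun γ => d₁ γ + d₂ γ) hsum hge

lemma fsd_simple_expansion {s : Esp n} (hs : s ∈ Φ.simples) :
    s = ∑ γ ∈ Φ.simples, (if γ = s then (1:ℝ) else 0) • γ := by
  have hcong : ∀ γ ∈ Φ.simples,
      (if γ = s then (1:ℝ) else 0) • γ = if γ = s then γ else 0 := by
    intro γ _
    split <;> simp
  rw [Finset.sum_congr rfl hcong, Finset.sum_ite_eq' Φ.simples s (fun γ => γ)]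
  simp [hs]

lemma fsd_supp_self {αi : Esp n} (hαi : αi ∈ Φ.simples) : Φ.SuppContains αi αi :=
  ⟨fun γ => if γ = αi then (1:ℝ) else 0, fsd_simple_expansion hαi, by simp⟩

/-- subtracting a different simple root keeps the support at `αi` -/
lemma fsd_supp_sub_simple (hnorm : ∀ α ∈ Φ.roots, (inner ℝ α α : ℝ) = 2)
    {αi : Esp n} (hαi : αi ∈ Φ.simples) {β αj : Esp n}
    (hβ : β ∈ Φ.pos) (hj : αj ∈ Φ.simples) (hne : αj ≠ αi)
    (hs : Φ.SuppContains αi β) : Φ.SuppContains αi (β - αj) := by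
  obtain ⟨d, hd⟩ := fsd_pos_nat_expansion hnorm hβ
  have h1 := fsd_supp_coeff hnorm hαi hs hd
  refine ⟨fun γ => (d γ : ℝ) - (if γ = αj then (1:ℝ) else 0), ?_, ?_⟩
  · have : ∀ γ ∈ Φ.simples,
        ((d γ : ℝ) - (if γ = αj then (1:ℝ) else 0)) • γ
          = (d γ : ℝ) • γ - (if γ = αj then (1:ℝ) else 0) • γ := by
      intro γ _
      rw [sub_smul]
    rw [Finset.sum_congr rfl this, Finset.sum_sub_distrib, ← hd,
      ← fsd_simple_expansion hj]
  · show (d αi : ℝ) - (if αi = αj then (1:ℝ) else 0) ≠ 0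
    rw [if_neg (show αi ≠ αj from fun h => hne h.symm)]
    have : (1 : ℝ) ≤ (d αi : ℝ) := by exact_mod_cast h1
    intro h
    linarith [h]

end FSDAux6
section FSDAux7

variable {n : ℕ} {Φ : RootSys n}

local notation "⟪" x ", " y "⟫" => (inner ℝ x y : ℝ)

lemma fsd_merge1 (hnorm : ∀ α ∈ Φ.roots, (inner ℝ α α : ℝ) = 2)
    {αi αj u' : Esp n} (hαi : αi ∈ Φ.simples) (hj : αj ∈ Φ.simples)
    (h1 : fsdGoal1 Φ αi u') (hip : ⟪αj, u'⟫ = -1) : fsdGoal1 Φ αi (u' + αj) := by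
  obtain ⟨β₁, hβ₁, β₂, hβ₂, hsum, hs₁, hs₂⟩ := h1
  have hjp := fsd_simple_mem_pos hj
  have hsplit : ⟪αj, β₁⟫ + ⟪αj, β₂⟫ = -1 := by
    rw [← inner_add_right, ← hsum]; exact hip
  have hb1 := fsd_ip_ge_neg_one hnorm hjp hβ₁
  have hb2 := fsd_ip_ge_neg_one hnorm hjp hβ₂
  have hone : ⟪αj, β₁⟫ = -1 ∨ ⟪αj, β₂⟫ = -1 := by
    rcases fsd_ip_cases hnorm (Φ.pos_subset hjp) (Φ.pos_subset hβ₁) with h|h|h|h|h <;>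
      rcases fsd_ip_cases hnorm (Φ.pos_subset hjp) (Φ.pos_subset hβ₂) with h'|h'|h'|h'|h' <;>
        first
          | (exact Or.inl h)
          | (exact Or.inr h')
          | linarith
  rcases hone with h | h
  · refine ⟨β₁ + αj, fsd_add_pos hnorm hβ₁ hjp (by rw [real_inner_comm]; exact h),
      β₂, hβ₂, by rw [hsum]; abel, ?_, hs₂⟩
    exact fsd_supp_add hnorm hαi hβ₁ hjp hs₁
  · refine ⟨β₁, hβ₁,
      β₂ + αj, fsd_add_pos hnorm hβ₂ hjp (by rw [real_inner_comm]; exact h),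
      by rw [hsum]; abel, hs₁, ?_⟩
    exact fsd_supp_add hnorm hαi hβ₂ hjp hs₂

lemma fsd_merge2 (hnorm : ∀ α ∈ Φ.roots, (inner ℝ α α : ℝ) = 2)
    {αi αj u' : Esp n} (hαi : αi ∈ Φ.simples) (hj : αj ∈ Φ.simples)
    (h2 : fsdGoal2 Φ αi u') (hip : ⟪αj, u'⟫ = -1) :
    fsdGoal1 Φ αi (u' + αj) ∨ fsdGoal2 Φ αi (u' + αj) := by
  obtain ⟨α, hα, β, hβ, γ, hγ, hab, hbc, hac, hsum, hsb⟩ := h2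
  have hjp := fsd_simple_mem_pos hj
  have hjr := Φ.pos_subset hjp
  have hαr := Φ.pos_subset hα
  have hβr := Φ.pos_subset hβ
  have hγr := Φ.pos_subset hγ
  have hjj : ⟪αj, αj⟫ = 2 := hnorm αj hjr
  have hxyz : ⟪αj, α⟫ + ⟪αj, β⟫ + ⟪αj, γ⟫ = -1 := by
    have h' : ⟪αj, α + β + γ⟫ = ⟪αj, α⟫ + ⟪αj, β⟫ + ⟪αj, γ⟫ := by
      rw [inner_add_right, inner_add_right]
    rw [← h', ← hsum]; exact hip
  have hx1 := fsd_ip_ge_neg_one hnorm hjp hα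
  have hy1 := fsd_ip_ge_neg_one hnorm hjp hβ
  have hz1 := fsd_ip_ge_neg_one hnorm hjp hγ
  have hx : ⟪αj, α⟫ = -1 ∨ ⟪αj, α⟫ = 0 ∨ ⟪αj, α⟫ = 1 := by
    rcases fsd_ip_cases hnorm hjr hαr with h|h|h|h|h
    · linarith
    · exact Or.inl h
    · exact Or.inr (Or.inl h)
    · exact Or.inr (Or.inr h)
    · linarith
  have hy : ⟪αj, β⟫ = -1 ∨ ⟪αj, β⟫ = 0 ∨ ⟪αj, β⟫ = 1 := by
    rcases fsd_ip_cases hnorm hjr hβr with h|h|h|h|h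
    · linarith
    · exact Or.inl h
    · exact Or.inr (Or.inl h)
    · exact Or.inr (Or.inr h)
    · linarith
  have hz : ⟪αj, γ⟫ = -1 ∨ ⟪αj, γ⟫ = 0 ∨ ⟪αj, γ⟫ = 1 := by
    rcases fsd_ip_cases hnorm hjr hγr with h|h|h|h|h
    · linarith
    · exact Or.inl h
    · exact Or.inr (Or.inl h)
    · exact Or.inr (Or.inr h)
    · linarith
  have hba : ⟪β, α⟫ = -1 := by rw [real_inner_comm]; exact hab
  have hcb : ⟪γ, β⟫ = -1 := by rw [real_inner_comm]; exact hbc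
  have hca : ⟪γ, α⟫ = 0 := by rw [real_inner_comm]; exact hac
  rcases hx with hx'|hx'|hx' <;> rcases hy with hy'|hy'|hy' <;> rcases hz with hz'|hz'|hz' <;>
    try (exfalso; linarith)
  -- six surviving cases, in order:
  -- (x,y,z) = (-1,-1,1)
  · exfalso
    have hbj : β + αj ∈ Φ.pos :=
      fsd_add_pos hnorm hβ hjp (by rw [real_inner_comm]; exact hy')
    have haj : ⟪α, αj⟫ = -1 := by rw [real_inner_comm]; exact hx'
    have h2' : ⟪α, β + αj⟫ = -2 := by rw [inner_add_right, hab, haj]; norm_num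
    exact fsd_pos_ne_neg hα hbj
      (fsd_eq_neg_of_ip_negtwo hnorm hαr (Φ.pos_subset hbj) h2')
  -- (x,y,z) = (-1,0,0)
  · right
    have haj : ⟪α, αj⟫ = -1 := by rw [real_inner_comm]; exact hx'
    refine ⟨α + αj, fsd_add_pos hnorm hα hjp haj, β, hβ, γ, hγ, ?_, hbc, ?_, ?_, hsb⟩
    · rw [inner_add_left, hab, hy']; norm_num
    · rw [inner_add_left, hac, hz']; norm_num
    · rw [hsum]; abel
  -- (x,y,z) = (-1,1,-1)
  · obtain ⟨dα, hdα⟩ := fsd_pos_nat_expansion hnorm hα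
    have haj : ⟪α, αj⟫ = -1 := by rw [real_inner_comm]; exact hx'
    have hgj : ⟪γ, αj⟫ = -1 := by rw [real_inner_comm]; exact hz'
    have hbj : ⟪β, αj⟫ = 1 := by rw [real_inner_comm]; exact hy'
    by_cases hcase : 1 ≤ dα αi ∨ αj = αi
    · left
      refine ⟨α + αj, fsd_add_pos hnorm hα hjp haj,
        β + γ, fsd_add_pos hnorm hβ hγ hbc, by rw [hsum]; abel, ?_, ?_⟩
      · rcases hcase with h | h
        · exact fsd_supp_add hnorm hαi hα hjp (fsd_supp_of_nat hdα h)
        · subst h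
          rw [add_comm]
          exact fsd_supp_add hnorm hαi hjp hα (fsd_supp_self hαi)
      · exact fsd_supp_add hnorm hαi hβ hγ hsb
    · push_neg at hcase
      right
      have hβj : β ≠ αj := by
        intro h
        rw [h, hjj] at hbj
        norm_num at hbj
      have hsub : β - αj ∈ Φ.pos := fsd_sub_simple_pos hnorm hβ hj hβj hbj
      refine ⟨α + αj, fsd_add_pos hnorm hα hjp haj, β - αj, hsub,
        γ + αj, fsd_add_pos hnorm hγ hjp hgj, ?_, ?_, ?_, ?_, ?_⟩
      · rw [inner_add_left, inner_sub_right, inner_sub_right, hab, haj, hy', hjj]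
        norm_num
      · rw [inner_sub_left, inner_add_right, inner_add_right, hbc, hbj, hz', hjj]
        norm_num
      · rw [inner_add_left, inner_add_right, inner_add_right, hac, haj, hz', hjj]
        norm_num
      · rw [hsum]; abel
      · exact fsd_supp_sub_simple hnorm hαi hβ hj hcase.2 hsb
  -- (x,y,z) = (0,-1,0)
  · right
    have hbja : ⟪β, αj⟫ = -1 := by rw [real_inner_comm]; exact hy'
    have haj0 : ⟪α, αj⟫ = 0 := by rw [real_inner_comm]; exact hx'
    refine ⟨α, hα, β + αj, fsd_add_pos hnorm hβ hjp hbja, γ, hγ, ?_, ?_, hac, ?_, ?_⟩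
    · rw [inner_add_right, hab, haj0]; norm_num
    · rw [inner_add_left, hbc, hz']; norm_num
    · rw [hsum]; abel
    · exact fsd_supp_add hnorm hαi hβ hjp hsb
  -- (x,y,z) = (0,0,-1)
  · right
    have hgja : ⟪γ, αj⟫ = -1 := by rw [real_inner_comm]; exact hz'
    have haj0 : ⟪α, αj⟫ = 0 := by rw [real_inner_comm]; exact hx'
    have hbj0 : ⟪β, αj⟫ = 0 := by rw [real_inner_comm]; exact hy'
    refine ⟨α, hα, β, hβ, γ + αj, fsd_add_pos hnorm hγ hjp hgja, hab, ?_, ?_, ?_, hsb⟩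
    · rw [inner_add_right, hbc, hbj0]; norm_num
    · rw [inner_add_right, hac, haj0]; norm_num
    · rw [hsum]; abel
  -- (x,y,z) = (1,-1,-1)
  · exfalso
    have hbj : β + αj ∈ Φ.pos :=
      fsd_add_pos hnorm hβ hjp (by rw [real_inner_comm]; exact hy')
    have hgj : ⟪γ, αj⟫ = -1 := by rw [real_inner_comm]; exact hz'
    have h2' : ⟪γ, β + αj⟫ = -2 := by rw [inner_add_right, hcb, hgj]; norm_num
    exact fsd_pos_ne_neg hγ hbj
      (fsd_eq_neg_of_ip_negtwo hnorm hγr (Φ.pos_subset hbj) h2')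

end FSDAux7
section FSDAux8

variable {n : ℕ} {Φ : RootSys n}

local notation "⟪" x ", " y "⟫" => (inner ℝ x y : ℝ)

lemma fsd_seg_pos (hnorm : ∀ α ∈ Φ.roots, (inner ℝ α α : ℝ) = 2)
    {m : ℕ} {w : ℕ → Esp n}
    (hws : ∀ k, k ≤ m → w k ∈ Φ.simples)
    (hchain : ∀ k, k + 1 ≤ m → ⟪w k, w (k + 1)⟫ = -1)
    (hfar : ∀ k l, l ≤ m → k + 2 ≤ l → ⟪w k, w l⟫ = 0) :
    ∀ b a, a ≤ b → b ≤ m → ∑ k ∈ Finset.Ico a (b + 1), w k ∈ Φ.pos := by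
  intro b
  induction b with
  | zero =>
    intro a ha _
    interval_cases a
    simpa using fsd_simple_mem_pos (hws 0 (Nat.zero_le m))
  | succ b ih =>
    intro a hab hbm
    by_cases hae : a = b + 1
    · have hsing : Finset.Ico a (b + 1 + 1) = {a} := by
        ext x; simp only [Finset.mem_Ico, Finset.mem_singleton]; omega
      rw [hsing, Finset.sum_singleton]
      exact fsd_simple_mem_pos (hws a (by omega))
    · have hab' : a ≤ b := by omega
      have hbm' : b ≤ m := by omega
      have hS := ih a hab' hbm'
      have hsplit : ∑ k ∈ Finset.Ico a (b + 1 + 1), w k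
          = (∑ k ∈ Finset.Ico a (b + 1), w k) + w (b + 1) := by
        rw [Finset.sum_Ico_succ_top (by omega : a ≤ b + 1)]
      rw [hsplit]
      apply fsd_add_pos hnorm hS (fsd_simple_mem_pos (hws (b+1) hbm))
      rw [sum_inner]
      rw [Finset.sum_eq_single_of_mem b (by simp [Finset.mem_Ico]; omega)]
      · exact hchain b hbm
      · intro k hk hkb
        have hk' := Finset.mem_Ico.mp hk
        exact hfar k (b + 1) hbm (by omega)

lemma fsd_winj (hnorm : ∀ α ∈ Φ.roots, (inner ℝ α α : ℝ) = 2)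
    {m : ℕ} {w : ℕ → Esp n}
    (hws : ∀ k, k ≤ m → w k ∈ Φ.simples)
    (hchain : ∀ k, k + 1 ≤ m → ⟪w k, w (k + 1)⟫ = -1)
    (hfar : ∀ k l, l ≤ m → k + 2 ≤ l → ⟪w k, w l⟫ = 0) :
    ∀ a b, a < b → b ≤ m → w a ≠ w b := by
  intro a b hab hbm heq
  have h2 : ⟪w a, w b⟫ = 2 := by
    rw [← heq]
    exact hnorm (w a) (Φ.pos_subset (fsd_simple_mem_pos (hws a (by omega))))
  by_cases hsucc : b = a + 1
  · subst hsucc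
    rw [hchain a hbm] at h2
    norm_num at h2
  · rw [hfar a b hbm (by omega)] at h2
    norm_num at h2

lemma fsd_seg_supp (hnorm : ∀ α ∈ Φ.roots, (inner ℝ α α : ℝ) = 2)
    {αi : Esp n} (hαi : αi ∈ Φ.simples)
    {m : ℕ} {w : ℕ → Esp n}
    (hws : ∀ k, k ≤ m → w k ∈ Φ.simples)
    (hchain : ∀ k, k + 1 ≤ m → ⟪w k, w (k + 1)⟫ = -1)
    (hfar : ∀ k l, l ≤ m → k + 2 ≤ l → ⟪w k, w l⟫ = 0)
    (hlast : w m = αi) :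
    ∀ a, a ≤ m → Φ.SuppContains αi (∑ k ∈ Finset.Ico a (m + 1), w k) := by
  intro a ham
  classical
  set I := (Finset.Ico a (m + 1)).image w with hI
  have hIsub : I ⊆ Φ.simples := by
    intro γ hγ
    obtain ⟨k, hk, rfl⟩ := Finset.mem_image.mp hγ
    exact hws k (by have := Finset.mem_Ico.mp hk; omega)
  refine ⟨fun γ => if γ ∈ I then (1:ℝ) else 0, ?_, ?_⟩
  · have h1 : ∀ γ ∈ Φ.simples,
        (if γ ∈ I then (1:ℝ) else 0) • γ = if γ ∈ I then γ else 0 := by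
      intro γ _
      split <;> simp
    rw [Finset.sum_congr rfl h1, ← Finset.sum_filter,
      Finset.filter_mem_eq_inter, Finset.inter_eq_right.mpr hIsub]
    rw [hI, Finset.sum_image ?hinj]
    case hinj =>
      intro k hk l hl hkl
      by_contra hne
      rcases Nat.lt_or_ge k l with h | h
      · exact fsd_winj hnorm hws hchain hfar k l h
          (by have := Finset.mem_Ico.mp hl; omega) hkl
      · have hlk : l < k := by omega
        exact fsd_winj hnorm hws hchain hfar l k hlk
          (by have := Finset.mem_Ico.mp hk; omega) hkl.symm
  · have hmem : αi ∈ I := by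
      rw [hI]
      exact Finset.mem_image.mpr ⟨m, by simp [Finset.mem_Ico]; omega, hlast⟩
    show (if αi ∈ I then (1:ℝ) else 0) ≠ 0
    rw [if_pos hmem]
    norm_num

end FSDAux8
section FSDAux9

variable {n : ℕ} {Φ : RootSys n}

local notation "⟪" x ", " y "⟫" => (inner ℝ x y : ℝ)

lemma fsd_merge3 (hnorm : ∀ α ∈ Φ.roots, (inner ℝ α α : ℝ) = 2)
    {αi αj u' : Esp n} (hαi : αi ∈ Φ.simples) (hj : αj ∈ Φ.simples)
    (h3 : fsdGoal3 Φ αi u') (hip : ⟪αj, u'⟫ = -1) :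
    fsdGoal2 Φ αi (u' + αj) ∨ fsdGoal3 Φ αi (u' + αj) := by
  classical
  obtain ⟨m, w, hws, hsum, hchain, hfar, hlast⟩ := h3
  have hjp := fsd_simple_mem_pos hj
  have hjr := Φ.pos_subset hjp
  have hgsum : ∑ k ∈ Finset.range (m + 1), ⟪αj, w k⟫ = -1 := by
    rw [← inner_sum, ← hsum]; exact hip
  by_cases hjin : ∃ p, p ≤ m ∧ w p = αj
  · exfalso
    obtain ⟨p, hpm, hwp⟩ := hjin
    have hgp : ⟪αj, w p⟫ = 2 := by rw [hwp]; exact hnorm αj hjr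
    have hterm0 : ∀ k, k ≤ m → k ≠ p → ¬((k = p - 1 ∧ 1 ≤ p) ∨ k = p + 1) →
        ⟪αj, w k⟫ = 0 := by
      intro k hk hkp h1
      rcases Nat.lt_or_ge k p with h | h
      · have hk2 : k + 2 ≤ p := by omega
        rw [real_inner_comm, ← hwp]
        exact hfar k p hpm hk2
      · have hp2 : p + 2 ≤ k := by omega
        rw [← hwp]
        exact hfar p k hk hp2
    have hbound : ∀ k ∈ (Finset.range (m + 1)).erase p,
        (if (k = p - 1 ∧ 1 ≤ p) ∨ k = p + 1 then (-1 : ℝ) else 0) ≤ ⟪αj, w k⟫ := by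
      intro k hk
      obtain ⟨hkp, hkr⟩ := Finset.mem_erase.mp hk
      have hkm : k ≤ m := by have := Finset.mem_range.mp hkr; omega
      by_cases hc : (k = p - 1 ∧ 1 ≤ p) ∨ k = p + 1
      · rw [if_pos hc]
        exact fsd_ip_ge_neg_one hnorm hjp (fsd_simple_mem_pos (hws k hkm))
      · rw [if_neg hc, hterm0 k hkm hkp hc]
    have hpmem : p ∈ Finset.range (m + 1) := Finset.mem_range.mpr (by omega)
    have hsplit : ⟪αj, w p⟫ + ∑ k ∈ (Finset.range (m + 1)).erase p, ⟪αj, w k⟫ = -1 :=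
      (Finset.add_sum_erase (Finset.range (m + 1)) (fun k => ⟪αj, w k⟫) hpmem).trans hgsum
    have hite : (-2 : ℝ) ≤ ∑ k ∈ (Finset.range (m + 1)).erase p,
        (if (k = p - 1 ∧ 1 ≤ p) ∨ k = p + 1 then (-1 : ℝ) else 0) := by
      rw [← Finset.sum_filter]
      have hsub : ((Finset.range (m + 1)).erase p).filter
          (fun k => (k = p - 1 ∧ 1 ≤ p) ∨ k = p + 1) ⊆ {p - 1, p + 1} := by
        intro x hx
        rcases (Finset.mem_filter.mp hx).2 with h | h
        · exact Finset.mem_insert.mpr (Or.inl h.1)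
        · exact Finset.mem_insert.mpr (Or.inr (Finset.mem_singleton.mpr h))
      have hcard := Finset.card_le_card hsub
      have hcard2 : ({p - 1, p + 1} : Finset ℕ).card ≤ 2 := by
        apply le_trans (Finset.card_insert_le _ _)
        simp
      rw [Finset.sum_const]
      have : (((Finset.range (m + 1)).erase p).filter
          (fun k => (k = p - 1 ∧ 1 ≤ p) ∨ k = p + 1)).card ≤ 2 := le_trans hcard hcard2
      have hc : ((((Finset.range (m + 1)).erase p).filter
          (fun k => (k = p - 1 ∧ 1 ≤ p) ∨ k = p + 1)).card : ℝ) ≤ 2 := by exact_mod_cast this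
      rw [nsmul_eq_mul]
      nlinarith
    have hge := Finset.sum_le_sum hbound
    linarith
  · push_neg at hjin
    have hsmall : ∀ k, k ≤ m → ⟪αj, w k⟫ = 0 ∨ ⟪αj, w k⟫ = -1 := fun k hk =>
      fsd_simple_pair hnorm hj (hws k hk) (fun h => hjin k hk h.symm)
    have hex : ∃ k₀, k₀ ≤ m ∧ ⟪αj, w k₀⟫ = -1 := by
      by_contra hc
      push_neg at hc
      have hz : ∑ k ∈ Finset.range (m + 1), ⟪αj, w k⟫ = 0 := by
        apply Finset.sum_eq_zero
        intro k hk
        have hkm : k ≤ m := by have := Finset.mem_range.mp hk; omega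
        rcases hsmall k hkm with h | h
        · exact h
        · exact absurd h (hc k hkm)
      rw [hz] at hgsum
      norm_num at hgsum
    obtain ⟨k₀, hk₀m, hgk₀⟩ := hex
    have hg0 : ∀ k, k ≤ m → k ≠ k₀ → ⟪αj, w k⟫ = 0 := by
      intro k hk hkne
      rcases hsmall k hk with h | h
      · exact h
      · exfalso
        have hpairsub : ({k, k₀} : Finset ℕ) ⊆ Finset.range (m + 1) := by
          intro x hx
          rcases Finset.mem_insert.mp hx with rfl | hx
          · exact Finset.mem_range.mpr (by omega)
          · rw [Finset.mem_singleton.mp hx]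
            exact Finset.mem_range.mpr (by omega)
        have hle := Finset.sum_le_sum_of_subset_of_nonneg
          (f := fun i => -⟪αj, w i⟫) hpairsub ?_
        · rw [Finset.sum_pair hkne] at hle
          have hsn : ∑ i ∈ Finset.range (m + 1), -⟪αj, w i⟫ = 1 := by
            rw [Finset.sum_neg_distrib, hgsum]
            norm_num
          rw [hsn, h, hgk₀] at hle
          norm_num at hle
        · intro i hi _
          have him : i ≤ m := by have := Finset.mem_range.mp hi; omega
          show (0:ℝ) ≤ -⟪αj, w i⟫
          rcases hsmall i him with h' | h' <;> (rw [h']; norm_num)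
    by_cases hk00 : k₀ = 0
    · -- prepend αj to the chain: Goal3
      right
      refine ⟨m + 1, fun k => if k = 0 then αj else w (k - 1), ?_, ?_, ?_, ?_, ?_⟩
      · intro k hk
        by_cases h : k = 0
        · simp only [if_pos h]; exact hj
        · simp only [if_neg h]; exact hws (k - 1) (by omega)
      · have hterm : ∀ k ∈ Finset.range (m + 1),
            (if k + 1 = 0 then αj else w (k + 1 - 1)) = w k := by
          intro k _
          rw [if_neg (Nat.succ_ne_zero k), Nat.add_sub_cancel]
        rw [Finset.sum_range_succ', Finset.sum_congr rfl hterm, if_pos rfl, ← hsum]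
      · intro k hk
        by_cases h : k = 0
        · subst h
          rw [hk00] at hgk₀
          simp only [if_pos rfl, if_neg (Nat.one_ne_zero), Nat.sub_self]
          exact hgk₀
        · simp only [if_neg h, if_neg (Nat.succ_ne_zero k), Nat.add_sub_cancel]
          have := hchain (k - 1) (by omega)
          rwa [show k - 1 + 1 = k by omega] at this
      · intro k l hl hkl
        have hl0 : l ≠ 0 := by omega
        by_cases h : k = 0
        · simp only [if_pos h, if_neg hl0]
          exact hg0 (l - 1) (by omega) (by omega)
        · simp only [if_neg h, if_neg hl0]
          exact hfar (k - 1) (l - 1) (by omega) (by omega)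
      · simp only [if_neg (Nat.succ_ne_zero m), Nat.add_sub_cancel]
        exact hlast
    · by_cases hk0m : k₀ = m
      · -- k₀ = m ≥ 1 : Goal2 with (prefix, w m, αj)
        left
        have hm1 : 1 ≤ m := by omega
        rw [hk0m] at hgk₀
        refine ⟨∑ k ∈ Finset.Ico 0 m, w k, ?_, w m, fsd_simple_mem_pos (hws m le_rfl),
          αj, hjp, ?_, ?_, ?_, ?_, ?_⟩
        · have := fsd_seg_pos hnorm hws hchain hfar (m - 1) 0 (by omega) (by omega)
          rwa [show m - 1 + 1 = m by omega] at this
        · rw [sum_inner]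
          rw [Finset.sum_eq_single_of_mem (m - 1)
            (Finset.mem_Ico.mpr (by omega))]
          · have := hchain (m - 1) (by omega)
            rwa [show m - 1 + 1 = m by omega] at this
          · intro k hk hkne
            have hk' := Finset.mem_Ico.mp hk
            exact hfar k m le_rfl (by omega)
        · rw [real_inner_comm]; exact hgk₀
        · rw [sum_inner]
          apply Finset.sum_eq_zero
          intro k hk
          have hk' := Finset.mem_Ico.mp hk
          rw [real_inner_comm]
          exact hg0 k (by omega) (by omega)
        · rw [hsum, Finset.range_eq_Ico,
            show Finset.Ico 0 (m + 1) = Finset.Ico 0 m ∪ Finset.Ico m (m+1) from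
              (Finset.Ico_union_Ico_eq_Ico (by omega) (by omega)).symm]
          rw [Finset.sum_union (by
            apply Finset.Ico_disjoint_Ico_consecutive)]
          have : Finset.Ico m (m+1) = {m} := by
            ext x; simp only [Finset.mem_Ico, Finset.mem_singleton]; omega
          rw [this, Finset.sum_singleton]
          try abel
        · rw [hlast]; exact fsd_supp_self hαi
      · -- 1 ≤ k₀ ≤ m - 1 : Goal2 with (αj, suffix, prefix)
        left
        refine ⟨αj, hjp, ∑ k ∈ Finset.Ico k₀ (m + 1), w k, ?_,
          ∑ k ∈ Finset.Ico 0 k₀, w k, ?_, ?_, ?_, ?_, ?_, ?_⟩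
        · have := fsd_seg_pos hnorm hws hchain hfar m k₀ hk₀m le_rfl
          exact this
        · have := fsd_seg_pos hnorm hws hchain hfar (k₀ - 1) 0 (by omega) (by omega)
          rwa [show k₀ - 1 + 1 = k₀ by omega] at this
        · rw [inner_sum]
          rw [Finset.sum_eq_single_of_mem k₀ (Finset.mem_Ico.mpr (by omega))]
          · exact hgk₀
          · intro k hk hkne
            have hk' := Finset.mem_Ico.mp hk
            exact hg0 k (by omega) hkne
        · rw [sum_inner]
          rw [Finset.sum_eq_single_of_mem k₀ (Finset.mem_Ico.mpr (by omega))]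
          · rw [inner_sum]
            rw [Finset.sum_eq_single_of_mem (k₀ - 1) (Finset.mem_Ico.mpr (by omega))]
            · rw [real_inner_comm]
              have := hchain (k₀ - 1) (by omega)
              rwa [show k₀ - 1 + 1 = k₀ by omega] at this
            · intro l hl hlne
              have hl' := Finset.mem_Ico.mp hl
              rw [real_inner_comm]
              exact hfar l k₀ hk₀m (by omega)
          · intro k hk hkne
            have hk' := Finset.mem_Ico.mp hk
            rw [inner_sum]
            apply Finset.sum_eq_zero
            intro l hl
            have hl' := Finset.mem_Ico.mp hl
            rw [real_inner_comm]
            exact hfar l k (by omega) (by omega)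
        · rw [inner_sum]
          apply Finset.sum_eq_zero
          intro k hk
          have hk' := Finset.mem_Ico.mp hk
          exact hg0 k (by omega) (by omega)
        · rw [hsum, Finset.range_eq_Ico,
            ← Finset.sum_Ico_consecutive _ (Nat.zero_le k₀) (by omega : k₀ ≤ m + 1)]
          abel
        · exact fsd_seg_supp hnorm hαi hws hchain hfar hlast k₀ hk₀m

end FSDAux9
section FSDAux10

variable {n : ℕ} {Φ : RootSys n}

local notation "⟪" x ", " y "⟫" => (inner ℝ x y : ℝ)

lemma fsd_main (hnorm : ∀ α ∈ Φ.roots, (inner ℝ α α : ℝ) = 2)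
    {αi : Esp n} (hαi : αi ∈ Φ.simples) (N : ℕ) :
    ∀ u ∈ Φ.pos, ⟪fsdRho Φ, u⟫ ≤ (N : ℝ) →
    ∀ d : Esp n → ℕ, u = ∑ γ ∈ Φ.simples, (d γ : ℝ) • γ → 1 ≤ d αi →
    fsdGoal1 Φ αi u ∨ fsdGoal2 Φ αi u ∨ fsdGoal3 Φ αi u := by
  classical
  induction N using Nat.strong_induction_on with
  | _ N ih =>
    intro u hu hle d hd hdi
    by_cases hus : u ∈ Φ.simples
    · right; right
      have hui : u = αi := by
        by_contra hne
        have hind := fsd_simple_expansion hus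
        have hcoef := fsd_coeff_unique hnorm (hd.symm.trans hind) αi hαi
        rw [if_neg (fun h : αi = u => hne h.symm)] at hcoef
        have h1 : (1:ℝ) ≤ (d αi : ℝ) := by exact_mod_cast hdi
        rw [hcoef] at h1
        norm_num at h1
      refine ⟨0, fun _ => αi, fun k _ => hαi, ?_, ?_, ?_, rfl⟩
      · rw [hui]; simp
      · intro k hk; exact absurd hk (by omega)
      · intro k l hl hkl; exact absurd hl (by omega)
    · have h2u : ⟪u, u⟫ = 2 := hnorm u (Φ.pos_subset hu)
      have hsum2 : ∑ γ ∈ Φ.simples, (d γ : ℝ) * ⟪γ, u⟫ = 2 := by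
        have h1 : ⟪u, u⟫ = ∑ γ ∈ Φ.simples, (d γ : ℝ) * ⟪γ, u⟫ := by
          nth_rewrite 1 [hd]
          rw [sum_inner]
          apply Finset.sum_congr rfl
          intro γ _
          rw [real_inner_smul_left]
        rw [← h1]
        exact h2u
      have hpeel : ∃ j ∈ Φ.simples, 1 ≤ d j ∧ ⟪u, j⟫ = 1 ∧ (j ≠ αi ∨ 2 ≤ d αi) := by
        by_contra hc
        push_neg at hc
        have hbound : ∀ γ ∈ Φ.simples,
            (d γ : ℝ) * ⟪γ, u⟫ ≤ (if γ = αi then (1:ℝ) else 0) := by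
          intro γ hγ
          by_cases hdγ : d γ = 0
          · rw [hdγ]
            simp only [Nat.cast_zero, zero_mul]
            split <;> norm_num
          · have hd1 : 1 ≤ d γ := by omega
            have hd1r : (1:ℝ) ≤ (d γ : ℝ) := by exact_mod_cast hd1
            have hγu : ⟪γ, u⟫ = -1 ∨ ⟪γ, u⟫ = 0 ∨ ⟪γ, u⟫ = 1 := by
              apply fsd_ip_small hnorm (Φ.pos_subset (fsd_simple_mem_pos hγ))
                (Φ.pos_subset hu) (fun h => hus (h ▸ hγ))
                (fsd_pos_ne_neg (fsd_simple_mem_pos hγ) hu)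
            rcases hγu with h | h | h
            · rw [h]
              split <;> nlinarith
            · rw [h, mul_zero]
              split <;> norm_num
            · have hcγ := hc γ hγ hd1 (by rw [real_inner_comm]; exact h)
              rw [h, if_pos hcγ.1, mul_one]
              have hdγ1 : d γ = 1 := by
                have h2 := hcγ.2
                rw [← hcγ.1] at h2
                omega
              rw [hdγ1]
              norm_num
        have hs := Finset.sum_le_sum hbound
        rw [hsum2] at hs
        rw [Finset.sum_ite_eq' Φ.simples αi (fun _ => (1:ℝ)), if_pos hαi] at hs
        norm_num at hs
      obtain ⟨j, hjs, hdj, huj, hcond⟩ := hpeel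
      have hjp := fsd_simple_mem_pos hjs
      have hjr := Φ.pos_subset hjp
      have hune : u ≠ j := fun h => hus (h ▸ hjs)
      have hu' : u - j ∈ Φ.pos := fsd_sub_simple_pos hnorm hu hjs hune huj
      obtain ⟨d', hd'⟩ := fsd_pos_nat_expansion hnorm hu'
      have hrel : ∀ γ ∈ Φ.simples,
          (d γ : ℝ) = (d' γ : ℝ) + (if γ = j then (1:ℝ) else 0) := by
        apply fsd_coeff_unique hnorm
        have hrhs : ∑ γ ∈ Φ.simples, ((d' γ : ℝ) + (if γ = j then (1:ℝ) else 0)) • γ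
            = (u - j) + j := by
          have hterm : ∀ γ ∈ Φ.simples,
              ((d' γ : ℝ) + (if γ = j then (1:ℝ) else 0)) • γ
                = (d' γ : ℝ) • γ + (if γ = j then (1:ℝ) else 0) • γ := by
            intro γ _
            rw [add_smul]
          rw [Finset.sum_congr rfl hterm, Finset.sum_add_distrib, ← hd',
            ← fsd_simple_expansion hjs]
        rw [hrhs, sub_add_cancel, ← hd]
      have hd'i : 1 ≤ d' αi := by
        have hri := hrel αi hαi
        by_cases hij : αi = j
        · rw [if_pos hij] at hri
          have h2 : 2 ≤ d αi := by
            rcases hcond with h | h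
            · exact absurd hij.symm h
            · exact h
          have : (d αi : ℝ) = (d' αi : ℝ) + 1 := hri
          have hn : d αi = d' αi + 1 := by exact_mod_cast this
          omega
        · rw [if_neg hij, add_zero] at hri
          have hn : d αi = d' αi := by exact_mod_cast hri
          omega
      have hN2 : 2 ≤ N := by
        have hr2 := fsd_rho_ge_two hnorm hu
        have : (2:ℝ) ≤ (N:ℝ) := le_trans hr2 hle
        exact_mod_cast this
      have hrj := fsd_rho_ge_two hnorm hjp
      have hru' : ⟪fsdRho Φ, u - j⟫ ≤ ((N - 2 : ℕ) : ℝ) := by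
        rw [inner_sub_right]
        have hcast : ((N - 2 : ℕ) : ℝ) = (N : ℝ) - 2 := by
          rw [Nat.cast_sub hN2]; norm_num
        rw [hcast]
        linarith
      have hipj : ⟪j, u - j⟫ = -1 := by
        rw [inner_sub_right, real_inner_comm, huj, hnorm j hjr]
        norm_num
      have hcancel : u - j + j = u := by abel
      rcases ih (N - 2) (by omega) (u - j) hu' hru' d' hd' hd'i with h1 | h2 | h3
      · left
        have := fsd_merge1 hnorm hαi hjs h1 hipj
        rwa [hcancel] at this
      · have := fsd_merge2 hnorm hαi hjs h2 hipj
        rw [hcancel] at this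
        rcases this with h | h
        · exact Or.inl h
        · exact Or.inr (Or.inl h)
      · have := fsd_merge3 hnorm hαi hjs h3 hipj
        rw [hcancel] at this
        rcases this with h | h
        · exact Or.inr (Or.inl h)
        · exact Or.inr (Or.inr h)

end FSDAux10
/-- **Lemma.** Let `Φ` be a simply-laced irreducible root system that is not of type
`A` (equivalently, whose Dynkin diagram has a branch vertex: a simple root not
orthogonal to at least three other simple roots), let `r ∈ Φ⁺` have full support,
and let `α_i` be any simple root.  Then `r = β₁ + β₂` with `β₁, β₂ ∈ Φ⁺` both
supported on `α_i`, or `r = α + β + γ` where `α, β, γ` span a type `A₃` subsystem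
as simple roots and `β` is supported on `α_i`. -/
theorem full_support_decomposition {n : ℕ} (Φ : RootSys n)
    (hnorm : ∀ α ∈ Φ.roots, (inner ℝ α α : ℝ) = 2) (hirr : Φ.IsIrreducible)
    (hnotA : ∃ δ ∈ Φ.simples,
      3 ≤ (Φ.simples.filter (fun γ => γ ≠ δ ∧ (inner ℝ γ δ : ℝ) ≠ 0)).card)
    (r : Esp n) (hr : r ∈ Φ.pos)
    (hfull : ∃ c : Esp n → ℝ, r = ∑ γ ∈ Φ.simples, c γ • γ ∧ ∀ γ ∈ Φ.simples, 0 < c γ)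
    (αi : Esp n) (hαi : αi ∈ Φ.simples) :
    (∃ β₁ ∈ Φ.pos, ∃ β₂ ∈ Φ.pos, r = β₁ + β₂ ∧
        Φ.SuppContains αi β₁ ∧ Φ.SuppContains αi β₂) ∨
    (∃ α ∈ Φ.pos, ∃ β ∈ Φ.pos, ∃ γ ∈ Φ.pos,
        (inner ℝ α β : ℝ) = -1 ∧ (inner ℝ β γ : ℝ) = -1 ∧ (inner ℝ α γ : ℝ) = 0 ∧
        r = α + β + γ ∧ Φ.SuppContains αi β) := by
  classical
  obtain ⟨c, hc, hcpos⟩ := hfull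
  obtain ⟨d, hd⟩ := fsd_pos_nat_expansion hnorm hr
  have hdc : ∀ γ ∈ Φ.simples, c γ = (d γ : ℝ) := fun γ hγ =>
    fsd_coeff_unique hnorm (hc.symm.trans hd) γ hγ
  have hd1 : ∀ γ ∈ Φ.simples, 1 ≤ d γ := by
    intro γ hγ
    have hp := hcpos γ hγ
    rw [hdc γ hγ] at hp
    have : 0 < d γ := by exact_mod_cast hp
    omega
  obtain ⟨K, hK⟩ := fsd_rho_int hnorm (Φ.pos_subset hr)
  have hmain := fsd_main hnorm hαi K.toNat r hr
    (by rw [hK]; exact_mod_cast Int.self_le_toNat K) d hd (hd1 αi hαi)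
  rcases hmain with h1 | h2 | h3
  · left; exact h1
  · right; exact h2
  · exfalso
    obtain ⟨δ, hδs, hδcard⟩ := hnotA
    obtain ⟨m, w, hws, hsum, hchain, hfar, hlast⟩ := h3
    have hIsub : (Finset.range (m + 1)).image w ⊆ Φ.simples := by
      intro x hx
      obtain ⟨k, hk, rfl⟩ := Finset.mem_image.mp hx
      exact hws k (by have := Finset.mem_range.mp hk; omega)
    have hinj : ∀ a ∈ Finset.range (m + 1), ∀ b ∈ Finset.range (m + 1),
        w a = w b → a = b := by
      intro a ha b hb hab
      by_contra hne
      rcases Nat.lt_or_ge a b with h | h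
      · exact fsd_winj hnorm hws hchain hfar a b h
          (by have := Finset.mem_range.mp hb; omega) hab
      · exact fsd_winj hnorm hws hchain hfar b a (by omega)
          (by have := Finset.mem_range.mp ha; omega) hab.symm
    have hexp : r = ∑ γ' ∈ Φ.simples,
        (if γ' ∈ (Finset.range (m + 1)).image w then (1:ℝ) else 0) • γ' := by
      have h1 : ∀ γ' ∈ Φ.simples,
          (if γ' ∈ (Finset.range (m + 1)).image w then (1:ℝ) else 0) • γ'
            = if γ' ∈ (Finset.range (m + 1)).image w then γ' else 0 := by
        intro γ' _
        split <;> simp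
      rw [Finset.sum_congr rfl h1, ← Finset.sum_filter, Finset.filter_mem_eq_inter,
        Finset.inter_eq_right.mpr hIsub, Finset.sum_image hinj]
      exact hsum
    have himg : ∀ γ ∈ Φ.simples, ∃ p, p ≤ m ∧ w p = γ := by
      intro γ hγ
      by_contra hcon
      push_neg at hcon
      have hcoef := fsd_coeff_unique hnorm (hd.symm.trans hexp) γ hγ
      rw [if_neg (fun hmem => by
        obtain ⟨k, hk, he⟩ := Finset.mem_image.mp hmem
        exact hcon k (by have := Finset.mem_range.mp hk; omega) he)] at hcoef
      have h1 := hd1 γ hγ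
      have : (1:ℝ) ≤ (d γ : ℝ) := by exact_mod_cast h1
      rw [hcoef] at this
      norm_num at this
    obtain ⟨p, hpm, hwp⟩ := himg δ hδs
    have hsub : Φ.simples.filter (fun γ => γ ≠ δ ∧ (inner ℝ γ δ : ℝ) ≠ 0)
        ⊆ {w (p - 1), w (p + 1)} := by
      intro γ hγ
      obtain ⟨hγs, hγne, hγip⟩ := Finset.mem_filter.mp hγ
      obtain ⟨q, hqm, hwq⟩ := himg γ hγs
      have hqp : q ≠ p := fun h => hγne (by rw [← hwq, h, hwp])
      have hfar2 : ¬ (q + 2 ≤ p) ∧ ¬ (p + 2 ≤ q) := by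
        constructor
        · intro h
          apply hγip
          rw [← hwq, ← hwp]
          exact hfar q p hpm h
        · intro h
          apply hγip
          rw [← hwq, ← hwp, real_inner_comm]
          exact hfar p q hqm h
      have hq : q = p - 1 ∨ q = p + 1 := by omega
      rcases hq with h | h
      · exact Finset.mem_insert.mpr (Or.inl (by rw [← hwq, h]))
      · exact Finset.mem_insert.mpr
          (Or.inr (Finset.mem_singleton.mpr (by rw [← hwq, h])))
    have hcard := Finset.card_le_card hsub
    have hcard2 : ({w (p - 1), w (p + 1)} : Finset (Esp n)).card ≤ 2 :=
      le_trans (Finset.card_insert_le _ _) (by simp)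
    omega
end
end

section
/- Let Φ be the root system of type B_n and let w ∈ W(Φ) avoid the type A₃ patterns 3142 and 2413 and the two type B₂ patterns whose inversion sets have size two. Then for every positive root β ∈ Φ⁺, the roots β and β̂ have the same color with respect to w, where β̂ denotes the unique small positive root with the same support as β. -/
open scoped Classical
open Polynomial
noncomputable section

section AuxColor

variable {n : ℕ}

lemma stdB_apply (i k : Fin n) : stdB n i k = if k = i then 1 else 0 :=
  EuclideanSpace.single_apply i 1 k

/-- Partial sum functional extracting simple-root coefficients. -/
def Lmap (k : Fin n) : Esp n →ₗ[ℝ] ℝ where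
  toFun v := ∑ j ∈ Finset.Iic k, v j
  map_add' x y := by simp [Finset.sum_add_distrib]
  map_smul' r x := by simp [Finset.mul_sum]

lemma Lmap_apply (k : Fin n) (v : Esp n) : Lmap k v = ∑ j ∈ Finset.Iic k, v j := rfl

lemma Lmap_stdB (k i : Fin n) : Lmap k (stdB n i) = if i ≤ k then 1 else 0 := by
  simp [Lmap_apply, stdB_apply, Finset.sum_ite_eq', Finset.mem_Iic]

lemma Lmap_eq_zero (v : Esp n) (h : ∀ k, Lmap k v = 0) : v = 0 := by
  have H : ∀ m : ℕ, ∀ hm : m < n, v ⟨m, hm⟩ = 0 := by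
    intro m
    induction m using Nat.strong_induction_on with
    | _ m ih =>
      intro hm
      have h0 := h ⟨m, hm⟩
      rw [Lmap_apply, ← Finset.Iio_insert, Finset.sum_insert (by simp)] at h0
      have hz : ∑ j ∈ Finset.Iio (⟨m, hm⟩ : Fin n), v j = 0 := by
        refine Finset.sum_eq_zero fun j hj => ?_
        have hjm : (j : ℕ) < m := Fin.lt_def.mp (Finset.mem_Iio.mp hj)
        have := ih (j : ℕ) hjm j.isLt
        simpa using this
      rw [hz, add_zero] at h0
      exact h0
  ext k
  simpa using H k k.isLt

lemma Lmap_inj (v w : Esp n) (h : ∀ k, Lmap k v = Lmap k w) : v = w := by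
  have h0 : v - w = 0 := Lmap_eq_zero _ fun k => by rw [map_sub, h k, sub_self]
  exact sub_eq_zero.mp h0

lemma mem_typeBPos_iff (v : Esp n) : v ∈ typeBPos n ↔
    (∃ i j : Fin n, i < j ∧ (v = stdB n i - stdB n j ∨ v = stdB n i + stdB n j)) ∨
    ∃ i : Fin n, v = stdB n i := by
  simp [typeBPos]

lemma Lmap_typeB_cases {v : Esp n} (hv : v ∈ typeBPos n) (k : Fin n) :
    Lmap k v = 0 ∨ Lmap k v = 1 ∨ Lmap k v = 2 := by
  rcases (mem_typeBPos_iff v).mp hv with ⟨i, j, hij, hc | hc⟩ | ⟨i, hc⟩ <;> subst hc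
  · rw [map_sub, Lmap_stdB, Lmap_stdB]
    by_cases h2 : j ≤ k
    · have h1 : i ≤ k := le_trans hij.le h2
      simp [h1, h2]
    · by_cases h1 : i ≤ k <;> simp [h1, h2]
  · rw [map_add, Lmap_stdB, Lmap_stdB]
    split_ifs <;> norm_num
  · rw [Lmap_stdB]; split_ifs <;> norm_num

lemma Lmap_typeB_nonneg {v : Esp n} (hv : v ∈ typeBPos n) (k : Fin n) :
    0 ≤ Lmap k v := by
  rcases Lmap_typeB_cases hv k with h | h | h <;> rw [h] <;> norm_num

lemma Lmap_bSimple (k i : Fin n) : Lmap k (bSimple n i) = if i = k then 1 else 0 := by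
  unfold bSimple
  by_cases h : (i : ℕ) + 1 < n
  · rw [dif_pos h, map_sub, Lmap_stdB, Lmap_stdB]
    simp only [Fin.le_def, Fin.ext_iff]
    split_ifs with h1 h2 h3 h4 h5 h6 h7 <;> (try norm_num) <;> omega
  · have hk := k.isLt
    have hi := i.isLt
    rw [dif_neg h, sub_zero, Lmap_stdB]
    simp only [Fin.le_def, Fin.ext_iff]
    split_ifs with h1 h2 h3 h4 <;> (try norm_num) <;> omega

lemma bSimple_mem_typeBPos (i : Fin n) : bSimple n i ∈ typeBPos n := by
  unfold bSimple
  by_cases h : (i : ℕ) + 1 < n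
  · rw [dif_pos h]
    exact Or.inl ⟨i, ⟨(i : ℕ) + 1, h⟩, by simp [Fin.lt_def], Or.inl rfl⟩
  · rw [dif_neg h, sub_zero]
    exact Or.inr ⟨i, rfl⟩

lemma bSimple_injOn : ∀ i : Fin n, ∀ j : Fin n, bSimple n i = bSimple n j → i = j := by
  intro i j h
  by_contra hne
  have h2 := Lmap_bSimple i j
  rw [← h, Lmap_bSimple, if_pos rfl, if_neg (fun e => hne e.symm)] at h2
  exact one_ne_zero h2

end AuxColor

section AuxColor2

variable {n : ℕ}

lemma pos_mem_iff (Φ : RootSys n) (hpos : (Φ.pos : Set (Esp n)) = typeBPos n) (v : Esp n) :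
    v ∈ Φ.pos ↔ v ∈ typeBPos n := by
  rw [← hpos]; exact Iff.rfl

lemma zero_not_mem_pos (Φ : RootSys n) : (0 : Esp n) ∉ Φ.pos :=
  fun h => Φ.ne_zero 0 (Φ.pos_subset h) rfl

lemma simples_eq (Φ : RootSys n) (hpos : (Φ.pos : Set (Esp n)) = typeBPos n) :
    Φ.simples = Finset.univ.image (bSimple n) := by
  ext α
  simp only [RootSys.simples, Finset.mem_filter, Finset.mem_image, Finset.mem_univ, true_and]
  constructor
  · rintro ⟨hα, hind⟩
    rcases (mem_typeBPos_iff α).mp ((pos_mem_iff Φ hpos α).mp hα) with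
      ⟨i, j, hij, hc | hc⟩ | ⟨i, hc⟩
    · have hin : (i : ℕ) + 1 < n := lt_of_le_of_lt (Nat.succ_le.mpr (Fin.lt_def.mp hij)) j.isLt
      set m : Fin n := ⟨(i : ℕ) + 1, hin⟩ with hm
      by_cases hjm : j = m
      · exact ⟨i, by rw [hc, hjm]; unfold bSimple; rw [dif_pos hin]⟩
      · exfalso; apply hind
        have hmj : m < j := by
          have h1 := Fin.lt_def.mp hij
          have h2 : (i : ℕ) + 1 ≠ (j : ℕ) := fun e => hjm (Fin.ext e.symm)
          rw [Fin.lt_def]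
          show (i : ℕ) + 1 < (j : ℕ)
          omega
        refine ⟨stdB n i - stdB n m, ?_, stdB n m - stdB n j, ?_, ?_⟩
        · exact (pos_mem_iff Φ hpos _).mpr ((mem_typeBPos_iff _).mpr
            (Or.inl ⟨i, m, Fin.lt_def.mpr (Nat.lt_succ_self _), Or.inl rfl⟩))
        · exact (pos_mem_iff Φ hpos _).mpr ((mem_typeBPos_iff _).mpr
            (Or.inl ⟨m, j, hmj, Or.inl rfl⟩))
        · rw [hc]; abel
    · exfalso; apply hind
      refine ⟨stdB n i, ?_, stdB n j, ?_, hc⟩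
      · exact (pos_mem_iff Φ hpos _).mpr ((mem_typeBPos_iff _).mpr (Or.inr ⟨i, rfl⟩))
      · exact (pos_mem_iff Φ hpos _).mpr ((mem_typeBPos_iff _).mpr (Or.inr ⟨j, rfl⟩))
    · by_cases hin : (i : ℕ) + 1 < n
      · exfalso; apply hind
        refine ⟨stdB n i - stdB n ⟨(i : ℕ) + 1, hin⟩, ?_, stdB n ⟨(i : ℕ) + 1, hin⟩, ?_, ?_⟩
        · exact (pos_mem_iff Φ hpos _).mpr ((mem_typeBPos_iff _).mpr
            (Or.inl ⟨i, ⟨(i : ℕ) + 1, hin⟩, Fin.lt_def.mpr (Nat.lt_succ_self _), Or.inl rfl⟩))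
        · exact (pos_mem_iff Φ hpos _).mpr ((mem_typeBPos_iff _).mpr (Or.inr ⟨_, rfl⟩))
        · rw [hc]; abel
      · exact ⟨i, by rw [hc]; unfold bSimple; rw [dif_neg hin, sub_zero]⟩
  · rintro ⟨i, rfl⟩
    refine ⟨(pos_mem_iff Φ hpos _).mpr (bSimple_mem_typeBPos i), ?_⟩
    rintro ⟨β, hβ, γ, hγ, heq⟩
    have hβt := (pos_mem_iff Φ hpos β).mp hβ
    have hγt := (pos_mem_iff Φ hpos γ).mp hγ
    have hsum : ∀ k, Lmap k β + Lmap k γ = if i = k then 1 else 0 := fun k => by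
      rw [← map_add, ← heq, Lmap_bSimple]
    have hone : Lmap i β = 0 ∨ Lmap i γ = 0 := by
      have h1 := hsum i
      rw [if_pos rfl] at h1
      rcases Lmap_typeB_cases hβt i with h | h | h <;>
        rcases Lmap_typeB_cases hγt i with h' | h' | h' <;>
        first
          | (left; exact h)
          | (right; exact h')
          | (exfalso; rw [h, h'] at h1; norm_num at h1)
    have hzero : ∀ k, k ≠ i → Lmap k β = 0 ∧ Lmap k γ = 0 := by
      intro k hk
      have h1 := hsum k
      rw [if_neg (fun e => hk e.symm)] at h1
      have nb := Lmap_typeB_nonneg hβt k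
      have ng := Lmap_typeB_nonneg hγt k
      constructor <;> linarith
    rcases hone with h0 | h0
    · have hβ0 : β = 0 := Lmap_eq_zero β fun k => by
        by_cases hk : k = i
        · rw [hk]; exact h0
        · exact (hzero k hk).1
      exact zero_not_mem_pos Φ (hβ0 ▸ hβ)
    · have hγ0 : γ = 0 := Lmap_eq_zero γ fun k => by
        by_cases hk : k = i
        · rw [hk]; exact h0
        · exact (hzero k hk).2
      exact zero_not_mem_pos Φ (hγ0 ▸ hγ)

lemma weyl_maps_roots (Φ : RootSys n) {w : Esp n ≃ₗᵢ[ℝ] Esp n} (hw : w ∈ Φ.weylGroup) :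
    ∀ α ∈ Φ.roots, w α ∈ Φ.roots := by
  have key : (∀ α ∈ Φ.roots, w α ∈ Φ.roots) ∧ (∀ α ∈ Φ.roots, w⁻¹ α ∈ Φ.roots) := by
    induction hw using Subgroup.closure_induction with
    | mem g hg =>
      obtain ⟨β, hβ, rfl⟩ := hg
      have hrefl : ∀ α ∈ Φ.roots, rootReflection β α ∈ Φ.roots := Φ.reflect_mem β hβ
      have hinv : (rootReflection β)⁻¹ = rootReflection β := by
        ext x
        simp [rootReflection, LinearIsometryEquiv.inv_def]
      exact ⟨hrefl, by rw [hinv]; exact hrefl⟩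
    | one => exact ⟨fun α hα => hα, fun α hα => by simpa using hα⟩
    | mul g h hg hh ihg ihh =>
      refine ⟨fun α hα => ihg.1 _ (ihh.1 α hα), fun α hα => ?_⟩
      rw [mul_inv_rev]
      exact ihh.2 _ (ihg.2 α hα)
    | inv g hg ihg => exact ⟨ihg.2, by simpa using ihg.1⟩
  exact key.1

lemma mem_invSet_iff (Φ : RootSys n) (w : Esp n ≃ₗᵢ[ℝ] Esp n) (α : Esp n) :
    α ∈ Φ.invSet w ↔ α ∈ Φ.pos ∧ -(w α) ∈ Φ.pos := Finset.mem_filter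

lemma inv_closed (Φ : RootSys n) {w : Esp n ≃ₗᵢ[ℝ] Esp n} (hw : w ∈ Φ.weylGroup)
    {α β : Esp n} (hα : α ∈ Φ.invSet w) (hβ : β ∈ Φ.invSet w) (hs : α + β ∈ Φ.pos) :
    α + β ∈ Φ.invSet w := by
  rw [mem_invSet_iff] at hα hβ ⊢
  refine ⟨hs, ?_⟩
  have hroots : w (α + β) ∈ Φ.roots := weyl_maps_roots Φ hw _ (Φ.pos_subset hs)
  have heq : -(w (α + β)) = -(w α) + -(w β) := by rw [map_add, neg_add]
  rw [heq]
  exact Φ.pos_add _ hα.2 _ hβ.2 (by rw [← heq]; exact Φ.neg_mem _ hroots)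

lemma inv_coclosed (Φ : RootSys n) {w : Esp n ≃ₗᵢ[ℝ] Esp n} (hw : w ∈ Φ.weylGroup)
    {α β : Esp n} (hαp : α ∈ Φ.pos) (hβp : β ∈ Φ.pos)
    (hα : α ∉ Φ.invSet w) (hβ : β ∉ Φ.invSet w) (hs : α + β ∈ Φ.pos) :
    α + β ∉ Φ.invSet w := by
  have hwα : w α ∈ Φ.pos := by
    have hr : w α ∈ Φ.roots := weyl_maps_roots Φ hw _ (Φ.pos_subset hαp)
    have hnp : -(w α) ∉ Φ.pos := fun hc => hα ((mem_invSet_iff Φ w α).mpr ⟨hαp, hc⟩)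
    exact (Φ.pos_iff _ hr).mpr hnp
  have hwβ : w β ∈ Φ.pos := by
    have hr : w β ∈ Φ.roots := weyl_maps_roots Φ hw _ (Φ.pos_subset hβp)
    have hnp : -(w β) ∉ Φ.pos := fun hc => hβ ((mem_invSet_iff Φ w β).mpr ⟨hβp, hc⟩)
    exact (Φ.pos_iff _ hr).mpr hnp
  intro hcon
  rw [mem_invSet_iff] at hcon
  have hr2 : w (α + β) ∈ Φ.roots := weyl_maps_roots Φ hw _ (Φ.pos_subset hs)
  have hpos2 : w (α + β) ∈ Φ.pos := by
    rw [map_add]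
    exact Φ.pos_add _ hwα _ hwβ (by rw [← map_add]; exact hr2)
  exact ((Φ.pos_iff _ hr2).mp hpos2) hcon.2

end AuxColor2

section AuxColor3

variable {n : ℕ}

lemma mem_span_pair_iff {a b : Fin n} (hab : a ≠ b) (v : Esp n) :
    v ∈ Submodule.span ℝ ({stdB n a, stdB n b} : Set (Esp n)) ↔
      ∀ k, k ≠ a → k ≠ b → v k = 0 := by
  constructor
  · intro hv
    induction hv using Submodule.span_induction with
    | mem x hx =>
      intro k hka hkb
      rcases hx with rfl | rfl
      · simp [stdB_apply, hka]
      · simp [stdB_apply, hkb]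
    | zero => intro k _ _; simp
    | add x y hx hy ihx ihy => intro k hka hkb; simp [ihx k hka hkb, ihy k hka hkb]
    | smul r x hx ih => intro k hka hkb; simp [ih k hka hkb]
  · intro h
    have hv : v = v a • stdB n a + v b • stdB n b := by
      ext k
      by_cases hka : k = a
      · subst hka
        simp [stdB_apply, hab, Ne.symm hab]
      · by_cases hkb : k = b
        · subst hkb
          simp [stdB_apply, hka]
        · simp [stdB_apply, hka, hkb, h k hka hkb]
    rw [hv]
    exact add_mem
      (Submodule.smul_mem _ _ (Submodule.subset_span (Set.mem_insert _ _)))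
      (Submodule.smul_mem _ _ (Submodule.subset_span (Set.mem_insert_of_mem _ rfl)))

lemma B2key (Φ : RootSys n) (hpos : (Φ.pos : Set (Esp n)) = typeBPos n)
    {w : Esp n ≃ₗᵢ[ℝ] Esp n} (hw : w ∈ Φ.weylGroup) (hB2 : ¬ Φ.ContainsB2Pattern w)
    {a b : Fin n} (hab : a < b) :
    (stdB n a + stdB n b ∈ Φ.invSet w ↔ stdB n a ∈ Φ.invSet w) := by
  have hne : a ≠ b := hab.ne
  set p : Esp n := stdB n a - stdB n b with hp
  set q : Esp n := stdB n b with hq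
  set U : Submodule ℝ (Esp n) := Submodule.span ℝ ({stdB n a, stdB n b} : Set (Esp n)) with hU
  have eq1 : p + q = stdB n a := by rw [hp, hq]; abel
  have eq2 : p + 2 • q = stdB n a + stdB n b := by rw [hp, hq, two_smul]; abel
  have eq3 : q + (p + q) = stdB n a + stdB n b := by rw [eq1, hq]; exact add_comm _ _
  have hstd_ne : ∀ i : Fin n, stdB n i ≠ 0 := by
    intro i h
    have := congrArg (fun v : Esp n => v i) h
    simp [stdB_apply] at this
  have hpq_ne : p ≠ p + q := fun h => hstd_ne b (hq ▸ left_eq_add.mp h)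
  have hq_ne : q ≠ p + 2 • q := by
    intro h
    apply hstd_ne a
    rw [← eq1]
    rw [two_smul, ← add_assoc] at h
    have h2 : p + q + q = 0 + q := by rw [zero_add]; exact h.symm
    exact add_right_cancel h2
  have hUa : stdB n a ∈ U := Submodule.subset_span (Set.mem_insert _ _)
  have hUb : stdB n b ∈ U := Submodule.subset_span (Set.mem_insert_of_mem _ rfl)
  have hUp : p ∈ U := sub_mem hUa hUb
  have hUq : q ∈ U := hUb
  have hUpq : p + q ∈ U := by rw [eq1]; exact hUa
  have hUp2q : p + 2 • q ∈ U := by rw [eq2]; exact add_mem hUa hUb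
  have hpp : p ∈ Φ.pos := (pos_mem_iff Φ hpos _).mpr
    ((mem_typeBPos_iff _).mpr (Or.inl ⟨a, b, hab, Or.inl rfl⟩))
  have hqp : q ∈ Φ.pos := (pos_mem_iff Φ hpos _).mpr
    ((mem_typeBPos_iff _).mpr (Or.inr ⟨b, rfl⟩))
  have hpqp : p + q ∈ Φ.pos := by
    rw [eq1]
    exact (pos_mem_iff Φ hpos _).mpr ((mem_typeBPos_iff _).mpr (Or.inr ⟨a, rfl⟩))
  have h2p : stdB n a + stdB n b ∈ Φ.pos := (pos_mem_iff Φ hpos _).mpr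
    ((mem_typeBPos_iff _).mpr (Or.inl ⟨a, b, hab, Or.inr rfl⟩))
  have hli : LinearIndependent ℝ ![p, q] := by
    rw [LinearIndependent.pair_iff]
    intro s t hst
    have ha' := congrArg (fun v : Esp n => v a) hst
    have hb' := congrArg (fun v : Esp n => v b) hst
    simp only [hp, hq] at ha' hb'
    simp [stdB_apply, hne, Ne.symm hne] at ha' hb'
    constructor <;> linarith
  have hfilter : Φ.pos.filter (fun β => β ∈ U) = ({p, q, p + q, p + 2 • q} : Finset (Esp n)) := by
    ext x
    simp only [Finset.mem_filter, Finset.mem_insert, Finset.mem_singleton]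
    constructor
    · rintro ⟨hxp, hxU⟩
      have hco := (mem_span_pair_iff hne x).mp hxU
      rcases (mem_typeBPos_iff x).mp ((pos_mem_iff Φ hpos x).mp hxp) with
        ⟨i, j, hij, hc | hc⟩ | ⟨i, hc⟩
      · subst hc
        have hia : i = a ∨ i = b := by
          by_contra hcon
          push_neg at hcon
          have := hco i hcon.1 hcon.2
          simp [stdB_apply, hij.ne] at this
        have hja : j = a ∨ j = b := by
          by_contra hcon
          push_neg at hcon
          have := hco j hcon.1 hcon.2
          simp [stdB_apply, hij.ne'] at this
        rcases hia with rfl | rfl <;> rcases hja with rfl | rfl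
        · exact absurd hij (lt_irrefl _)
        · exact Or.inl hp.symm
        · exact absurd hab (lt_asymm hij)
        · exact absurd hij (lt_irrefl _)
      · subst hc
        have hia : i = a ∨ i = b := by
          by_contra hcon
          push_neg at hcon
          have := hco i hcon.1 hcon.2
          simp [stdB_apply, hij.ne] at this
        have hja : j = a ∨ j = b := by
          by_contra hcon
          push_neg at hcon
          have := hco j hcon.1 hcon.2
          simp [stdB_apply, hij.ne'] at this
        rcases hia with rfl | rfl <;> rcases hja with rfl | rfl
        · exact absurd hij (lt_irrefl _)
        · exact Or.inr (Or.inr (Or.inr eq2.symm))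
        · exact absurd hab (lt_asymm hij)
        · exact absurd hij (lt_irrefl _)
      · subst hc
        have hia : i = a ∨ i = b := by
          by_contra hcon
          push_neg at hcon
          have := hco i hcon.1 hcon.2
          simp [stdB_apply] at this
        rcases hia with rfl | rfl
        · exact Or.inr (Or.inr (Or.inl eq1.symm))
        · exact Or.inr (Or.inl hq.symm)
    · rintro (rfl | rfl | rfl | rfl)
      · exact ⟨hpp, hUp⟩
      · exact ⟨hqp, hUq⟩
      · exact ⟨hpqp, hUpq⟩
      · exact ⟨by rw [eq2]; exact h2p, hUp2q⟩
  constructor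
  · -- black β implies black hat
    intro hA2
    by_contra hA
    have hpq_not : p + q ∉ Φ.invSet w := by rw [eq1]; exact hA
    have hq_inv : q ∈ Φ.invSet w := by
      by_contra hq'
      have hcc := inv_coclosed Φ hw hqp hpqp hq' hpq_not (by rw [eq3]; exact h2p)
      rw [eq3] at hcc
      exact hcc hA2
    have hp_not : p ∉ Φ.invSet w := by
      intro hp'
      have := inv_closed Φ hw hp' hq_inv hpqp
      exact hpq_not this
    apply hB2
    refine ⟨U, p, q, hli, hfilter, ?_⟩
    have hfinv : (Φ.invSet w).filter (fun β => β ∈ U) = ({q, p + 2 • q} : Finset (Esp n)) := by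
      ext x
      simp only [Finset.mem_filter, Finset.mem_insert, Finset.mem_singleton]
      constructor
      · rintro ⟨hxi, hxU⟩
        have hxpos := ((mem_invSet_iff Φ w x).mp hxi).1
        have hx4 : x ∈ ({p, q, p + q, p + 2 • q} : Finset (Esp n)) := by
          rw [← hfilter]; exact Finset.mem_filter.mpr ⟨hxpos, hxU⟩
        simp only [Finset.mem_insert, Finset.mem_singleton] at hx4
        rcases hx4 with rfl | rfl | rfl | rfl
        · exact absurd hxi hp_not
        · exact Or.inl rfl
        · exact absurd hxi hpq_not
        · exact Or.inr rfl
      · rintro (rfl | rfl)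
        · exact ⟨hq_inv, hUq⟩
        · exact ⟨by rw [eq2]; exact hA2, hUp2q⟩
    rw [hfinv]
    exact Finset.card_pair hq_ne
  · -- black hat implies black β
    intro hA
    by_contra hA2
    have hpq_inv : p + q ∈ Φ.invSet w := by rw [eq1]; exact hA
    have hq_not : q ∉ Φ.invSet w := by
      intro hq'
      have := inv_closed Φ hw hq' hpq_inv (by rw [eq3]; exact h2p)
      rw [eq3] at this
      exact hA2 this
    have hp_inv : p ∈ Φ.invSet w := by
      by_contra hp'
      exact (inv_coclosed Φ hw hpp hqp hp' hq_not hpqp) hpq_inv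
    apply hB2
    refine ⟨U, p, q, hli, hfilter, ?_⟩
    have hfinv : (Φ.invSet w).filter (fun β => β ∈ U) = ({p, p + q} : Finset (Esp n)) := by
      ext x
      simp only [Finset.mem_filter, Finset.mem_insert, Finset.mem_singleton]
      constructor
      · rintro ⟨hxi, hxU⟩
        have hxpos := ((mem_invSet_iff Φ w x).mp hxi).1
        have hx4 : x ∈ ({p, q, p + q, p + 2 • q} : Finset (Esp n)) := by
          rw [← hfilter]; exact Finset.mem_filter.mpr ⟨hxpos, hxU⟩
        simp only [Finset.mem_insert, Finset.mem_singleton] at hx4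
        rcases hx4 with rfl | rfl | rfl | rfl
        · exact Or.inl rfl
        · exact absurd hxi hq_not
        · exact Or.inr rfl
        · exact absurd (by rwa [eq2] at hxi) hA2
      · rintro (rfl | rfl)
        · exact ⟨hp_inv, hUp⟩
        · exact ⟨hpq_inv, hUpq⟩
    rw [hfinv]
    exact Finset.card_pair hpq_ne
  
end AuxColor3

/-- **Lemma.** In type `Bₙ`, if `w` avoids the type `A₃` patterns `3142`, `2413`
and the two type `B₂` patterns with inversion sets of size two, then every positive
root `β` has the same color as the small root `β̂` with the same support. -/
theorem typeB_hat_same_color {n : ℕ} (Φ : RootSys n)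
    (hpos : (Φ.pos : Set (Esp n)) = typeBPos n)
    (hroots : (Φ.roots : Set (Esp n)) = (Φ.pos : Set (Esp n)) ∪ (-(Φ.pos : Set (Esp n))))
    (w : Esp n ≃ₗᵢ[ℝ] Esp n) (hw : w ∈ Φ.weylGroup)
    (hA3 : ¬ Φ.ContainsA3Pattern w) (hB2 : ¬ Φ.ContainsB2Pattern w) :
    ∀ β ∈ Φ.pos, ∀ βh ∈ Φ.pos, Φ.IsSmall βh →
      (∃ c d : Esp n → ℝ,
        β = ∑ γ ∈ Φ.simples, c γ • γ ∧ βh = ∑ γ ∈ Φ.simples, d γ • γ ∧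
        ∀ γ ∈ Φ.simples, (c γ ≠ 0 ↔ d γ ≠ 0)) →
      (β ∈ Φ.invSet w ↔ βh ∈ Φ.invSet w) := by
  intro β hβ βh hβh hsmall hex
  obtain ⟨c, d, hc, hd, hcd⟩ := hex
  have hS := simples_eq Φ hpos
  have coeff : ∀ (v : Esp n) (e : Esp n → ℝ), v = ∑ γ ∈ Φ.simples, e γ • γ →
      ∀ k, e (bSimple n k) = Lmap k v := by
    intro v e hv k
    rw [hv, hS, Finset.sum_image (fun x _ y _ h => bSimple_injOn x y h), map_sum]
    simp [Lmap_bSimple, mul_ite, Finset.sum_ite_eq']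
  have hsimp_mem : ∀ k : Fin n, bSimple n k ∈ Φ.simples := by
    intro k
    rw [hS]
    exact Finset.mem_image_of_mem _ (Finset.mem_univ k)
  have hcoef := coeff β c hc
  have hdcoef := coeff βh d hd
  obtain ⟨c', hc', hc01⟩ := hsmall
  have hhat01 : ∀ k, Lmap k βh = 0 ∨ Lmap k βh = 1 := by
    intro k
    rw [← coeff βh c' hc' k]
    exact hc01 _ (hsimp_mem k)
  have hsupp : ∀ k, (Lmap k β ≠ 0 ↔ Lmap k βh ≠ 0) := by
    intro k
    rw [← hcoef k, ← hdcoef k]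
    exact hcd _ (hsimp_mem k)
  have finish01 : (∀ k, Lmap k β = 0 ∨ Lmap k β = 1) →
      (β ∈ Φ.invSet w ↔ βh ∈ Φ.invSet w) := by
    intro h01
    have hbb : βh = β := Lmap_inj _ _ (fun k => by
      rcases h01 k with h | h
      · rw [h]; by_contra hne; exact ((hsupp k).mpr hne) h
      · rw [h]
        rcases hhat01 k with h' | h'
        · exact absurd h' ((hsupp k).mp (by rw [h]; norm_num))
        · exact h')
    rw [hbb]
  rcases (mem_typeBPos_iff β).mp ((pos_mem_iff Φ hpos β).mp hβ) with
    ⟨i, j, hij, hcase | hcase⟩ | ⟨i, hcase⟩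
  · apply finish01
    intro k
    rw [hcase, map_sub, Lmap_stdB, Lmap_stdB]
    by_cases h2 : j ≤ k
    · have h1 : i ≤ k := le_trans hij.le h2
      simp [h1, h2]
    · by_cases h1 : i ≤ k <;> simp [h1, h2]
  · have hhat : βh = stdB n i := Lmap_inj _ _ (fun k => by
      rw [Lmap_stdB]
      by_cases h1 : i ≤ k
      · have hne0 : Lmap k β ≠ 0 := by
          rw [hcase, map_add, Lmap_stdB, Lmap_stdB, if_pos h1]
          split_ifs <;> norm_num
        rcases hhat01 k with h | h
        · exact absurd h ((hsupp k).mp hne0)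
        · rw [h, if_pos h1]
      · have h2 : ¬ j ≤ k := fun hj => h1 (le_trans hij.le hj)
        have hz : Lmap k β = 0 := by
          rw [hcase, map_add, Lmap_stdB, Lmap_stdB, if_neg h1, if_neg h2]
          norm_num
        rw [if_neg h1]
        by_contra hne
        exact ((hsupp k).mpr hne) hz)
    rw [hcase, hhat]
    exact B2key Φ hpos hw hB2 hij
  · apply finish01
    intro k
    rw [hcase, Lmap_stdB]
    split_ifs <;> norm_num
end
end
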